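/- arXiv:1812.11679 — 11 statements merged into one kernel-verified Lean document; each statement's English description precedes it below -/
import Mathlib

section
/- Let p be an odd prime and let a₁, a₂, a₃, a₄, a₅ ∈ ℤ/pℤ with aᵢ = 0 for at least one index i. Then for every nonzero m ∈ ℤ/pℤ, the number of vectors v = (v₁,…,v₅) ∈ (ℤ/pℤ)⁵ with a₁v₁² + a₂v₂² + a₃v₃² + a₄v₄² + a₅v₅² = m is at most 2p⁴. -/
/-- Lemma 4.16 (lem_den_L'''): for an odd prime `p` and a diagonal quinary quadratic
form over `ℤ/pℤ` with at least one zero coefficient, a nonzero value `m` is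
represented at most `2p⁴` times. -/
theorem count_diagonal_quinary_le
    (p : ℕ) [Fact p.Prime] (hp2 : p ≠ 2)
    (a : Fin 5 → ZMod p) (ha : ∃ i, a i = 0)
    (m : ZMod p) (hm : m ≠ 0) :
    (Finset.univ.filter
        (fun v : Fin 5 → ZMod p => ∑ i, a i * v i ^ 2 = m)).card ≤ 2 * p ^ 4 := by
  by_cases hall : ∀ i, a i = 0
  · have : (Finset.univ.filter
        (fun v : Fin 5 → ZMod p => ∑ i, a i * v i ^ 2 = m)) = ∅ := by
      apply Finset.filter_false_of_mem
      intro v _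
      simp [hall, hm.symm]
    simp [this]
  · push_neg at hall
    obtain ⟨j, hj⟩ := hall
    set s := Finset.univ.filter
        (fun v : Fin 5 → ZMod p => ∑ i, a i * v i ^ 2 = m) with hs
    -- forget the j-th coordinate
    set f : (Fin 5 → ZMod p) → ({i : Fin 5 // i ≠ j} → ZMod p) :=
      fun v i => v i.1 with hf
    have key : s.card ≤ 2 * (Finset.univ : Finset ({i : Fin 5 // i ≠ j} → ZMod p)).card := by
      apply Finset.card_le_mul_card_image_of_maps_to (f := f) (fun _ _ => Finset.mem_univ _)
      intro b _
      by_cases hb : (s.filter (fun v => f v = b)).Nonempty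
      · obtain ⟨v₀, hv₀⟩ := hb
        have hv₀s : v₀ ∈ s := (Finset.mem_filter.mp hv₀).1
        have hv₀b : f v₀ = b := (Finset.mem_filter.mp hv₀).2
        have hsub : s.filter (fun v => f v = b) ⊆
            {v₀, Function.update v₀ j (-(v₀ j))} := by
          intro v hv
          have hvs : v ∈ s := (Finset.mem_filter.mp hv).1
          have hvb : f v = b := (Finset.mem_filter.mp hv).2
          -- v agrees with v₀ off j
          have hagree : ∀ i : Fin 5, i ≠ j → v i = v₀ i := by
            intro i hi
            have := congrFun (hvb.trans hv₀b.symm) ⟨i, hi⟩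
            exact this
          have hvm : ∑ i, a i * v i ^ 2 = m := by
            have := (Finset.mem_filter.mp hvs).2; exact this
          have hv₀m : ∑ i, a i * v₀ i ^ 2 = m := by
            have := (Finset.mem_filter.mp hv₀s).2; exact this
          -- split the sums at j
          have hsum : a j * v j ^ 2 + ∑ i ∈ Finset.univ.erase j, a i * v i ^ 2
              = a j * v₀ j ^ 2 + ∑ i ∈ Finset.univ.erase j, a i * v₀ i ^ 2 := by
            rw [Finset.add_sum_erase _ (fun i => a i * v i ^ 2) (Finset.mem_univ j),
              Finset.add_sum_erase _ (fun i => a i * v₀ i ^ 2) (Finset.mem_univ j), hvm, hv₀m]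
          have hrest : ∑ i ∈ Finset.univ.erase j, a i * v i ^ 2
              = ∑ i ∈ Finset.univ.erase j, a i * v₀ i ^ 2 := by
            apply Finset.sum_congr rfl
            intro i hi
            rw [hagree i (Finset.ne_of_mem_erase hi)]
          have hsq : v j ^ 2 = v₀ j ^ 2 := by
            have h1 : a j * v j ^ 2 = a j * v₀ j ^ 2 := by
              have := hsum
              rw [hrest] at this
              exact add_right_cancel this
            exact mul_left_cancel₀ hj h1
          have hcases : v j = v₀ j ∨ v j = -(v₀ j) := by
            have h0 : (v j - v₀ j) * (v j + v₀ j) = 0 := by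
              have : v j ^ 2 - v₀ j ^ 2 = 0 := by rw [hsq]; ring
              calc (v j - v₀ j) * (v j + v₀ j) = v j ^ 2 - v₀ j ^ 2 := by ring
                _ = 0 := this
            rcases mul_eq_zero.mp h0 with h | h
            · left; linear_combination h
            · right; linear_combination h
          have hvfun : ∀ x : ZMod p, v j = x → v = Function.update v₀ j x := by
            intro x hx
            funext i
            by_cases hij : i = j
            · subst hij; rw [Function.update_self]; exact hx
            · rw [Function.update_of_ne hij]; exact hagree i hij
          rcases hcases with h | h
          · have : v = v₀ := by
              have := hvfun (v₀ j) h
              rwa [Function.update_eq_self] at this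
            simp [this]
          · have : v = Function.update v₀ j (-(v₀ j)) := hvfun _ h
            simp [this]
        calc (s.filter (fun v => f v = b)).card
            ≤ ({v₀, Function.update v₀ j (-(v₀ j))} : Finset (Fin 5 → ZMod p)).card :=
              Finset.card_le_card hsub
          _ ≤ 2 := Finset.card_insert_le _ _ |>.trans (by simp)
      · rw [Finset.not_nonempty_iff_eq_empty] at hb
        simp [hb]
    calc s.card ≤ 2 * (Finset.univ : Finset ({i : Fin 5 // i ≠ j} → ZMod p)).card := key
      _ = 2 * p ^ 4 := by
          have h4 : Fintype.card { i : Fin 5 // i ≠ j } = 4 := by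
            simp [Fintype.card_subtype_compl]
          rw [Finset.card_univ, Fintype.card_fun, ZMod.card, h4]
end

section
/- Let p ≥ 3 be a prime, let A be a positive integer, and let a be an integer with 0 ≤ 2a ≤ A. Set A₋₁ = ⌊A/p⌋ and, for n ≥ 0, Aₙ = ⌊A·(pⁿ + p^{n−1} + ⋯ + p + 1 + 1/p)⌋. Let (r_{n,1})_{n≥0} and (r_{n,2})_{n≥0} be sequences of nonnegative real numbers which are eventually zero and satisfy r_{n,2} ≤ r_{n,1} and r_{n+1,2} ≤ r_{n,2} for all n ≥ 0. Then (A₋₁ + a)·r_{0,1} + (A₀ − A₋₁ − a)·r_{0,2} + ∑_{n≥1} ( a·pⁿ·r_{n,1} + (Aₙ − A_{n−1} − a·pⁿ)·r_{n,2} ) ≤ (A(p+2)/(2p))·r_{0,1} + (A/2)·r_{0,2} + ∑_{n≥1} (A·pⁿ/2)·(r_{n,1} + r_{n,2}). -/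
/-- The inequality underlying Corollary 7.4(1) (lem_count): with
`A₋₁ = ⌊A/p⌋`, `Aₙ = ⌊A(pⁿ + ⋯ + p + 1 + 1/p)⌋` and decaying sequences
`r_{n,1}, r_{n,2}`, the local intersection bound
`(A₋₁+a)r₀₁ + (A₀−A₋₁−a)r₀₂ + ∑_{n≥1}(apⁿ r_{n,1} + (Aₙ−A_{n−1}−apⁿ) r_{n,2})`
is at most
`(A(p+2)/(2p))r₀₁ + (A/2)r₀₂ + ∑_{n≥1}(Apⁿ/2)(r_{n,1}+r_{n,2})`. -/
theorem local_multiplicity_bound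
    (p : ℕ) (hp : p.Prime) (hp3 : 3 ≤ p)
    (A : ℕ) (hA : 0 < A) (a : ℕ) (ha : 2 * a ≤ A)
    (r1 r2 : ℕ → ℝ)
    (hr1 : ∀ n, 0 ≤ r1 n) (hr2 : ∀ n, 0 ≤ r2 n)
    (h21 : ∀ n, r2 n ≤ r1 n) (hmono : ∀ n, r2 (n + 1) ≤ r2 n)
    (hev1 : ∃ N, ∀ n, N ≤ n → r1 n = 0)
    (hev2 : ∃ N, ∀ n, N ≤ n → r2 n = 0)
    (Am1 : ℤ) (hAm1 : Am1 = ⌊(A : ℚ) / (p : ℚ)⌋)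
    (Aseq : ℕ → ℤ)
    (hAseq : ∀ n, Aseq n =
      ⌊(A : ℚ) * ((∑ i ∈ Finset.range (n + 1), (p : ℚ) ^ i) + ((p : ℚ))⁻¹)⌋) :
    ((Am1 : ℝ) + (a : ℝ)) * r1 0 + ((Aseq 0 : ℝ) - (Am1 : ℝ) - (a : ℝ)) * r2 0
      + (∑' n : ℕ, ((a : ℝ) * (p : ℝ) ^ (n + 1) * r1 (n + 1)
          + ((Aseq (n + 1) : ℝ) - (Aseq n : ℝ) - (a : ℝ) * (p : ℝ) ^ (n + 1)) * r2 (n + 1)))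
    ≤ ((A : ℝ) * ((p : ℝ) + 2) / (2 * (p : ℝ))) * r1 0 + ((A : ℝ) / 2) * r2 0
      + (∑' n : ℕ, ((A : ℝ) * (p : ℝ) ^ (n + 1) / 2) * (r1 (n + 1) + r2 (n + 1))) := by

  obtain ⟨N1, hN1⟩ := hev1
  obtain ⟨N2, hN2⟩ := hev2
  have hp0 : (0:ℝ) < (p:ℝ) := by exact_mod_cast hp.pos
  have hstep : ∀ n : ℕ, Aseq (n+1) = Aseq n + (A : ℤ) * (p:ℤ)^(n+1) := by
    intro n
    rw [hAseq, hAseq]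
    have h : (A : ℚ) * ((∑ i ∈ Finset.range (n + 1 + 1), (p : ℚ) ^ i) + ((p : ℚ))⁻¹)
        = (A : ℚ) * ((∑ i ∈ Finset.range (n + 1), (p : ℚ) ^ i) + ((p : ℚ))⁻¹)
          + (((A : ℤ) * (p:ℤ)^(n+1) : ℤ) : ℚ) := by
      rw [Finset.sum_range_succ]
      push_cast
      ring
    rw [h, Int.floor_add_intCast]
  have hA0 : Aseq 0 = (A : ℤ) + Am1 := by
    rw [hAseq, hAm1]
    have h : (A : ℚ) * ((∑ i ∈ Finset.range 1, (p : ℚ) ^ i) + ((p : ℚ))⁻¹)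
        = (A : ℚ) / (p : ℚ) + ((A : ℤ) : ℚ) := by
      rw [Finset.sum_range_one]
      push_cast
      ring
    rw [h, Int.floor_add_intCast, add_comm]
  have hAm1le : (Am1 : ℝ) ≤ (A : ℝ) / (p : ℝ) := by
    have h1 : (Am1 : ℚ) ≤ (A : ℚ) / (p : ℚ) := by
      rw [hAm1]; exact Int.floor_le _
    have h2 : ((Am1 : ℚ) : ℝ) ≤ (((A : ℚ) / (p : ℚ) : ℚ) : ℝ) := by exact_mod_cast h1
    push_cast at h2
    exact h2
  have h2a : (2:ℝ) * (a:ℝ) ≤ (A:ℝ) := by exact_mod_cast ha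
  have hterm : ∀ n : ℕ, (a : ℝ) * (p : ℝ) ^ (n + 1) * r1 (n + 1)
      + ((Aseq (n + 1) : ℝ) - (Aseq n : ℝ) - (a : ℝ) * (p : ℝ) ^ (n + 1)) * r2 (n + 1)
      ≤ ((A : ℝ) * (p : ℝ) ^ (n + 1) / 2) * (r1 (n + 1) + r2 (n + 1)) := by
    intro n
    have hd : (Aseq (n+1) : ℝ) - (Aseq n : ℝ) = (A:ℝ) * (p:ℝ)^(n+1) := by
      rw [hstep n]; push_cast; ring
    rw [hd]
    have hPpos : (0:ℝ) < (p:ℝ)^(n+1) := by positivity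
    have key : 0 ≤ ((A:ℝ) - 2*(a:ℝ)) * ((p:ℝ)^(n+1) * (r1 (n+1) - r2 (n+1))) :=
      mul_nonneg (by linarith) (mul_nonneg hPpos.le (by linarith [h21 (n+1)]))
    nlinarith [key]
  have hs1 : Summable (fun n : ℕ => (a : ℝ) * (p : ℝ) ^ (n + 1) * r1 (n + 1)
      + ((Aseq (n + 1) : ℝ) - (Aseq n : ℝ) - (a : ℝ) * (p : ℝ) ^ (n + 1)) * r2 (n + 1)) := by
    apply summable_of_ne_finset_zero (s := Finset.range (max N1 N2))
    intro n hn
    simp only [Finset.mem_range, not_lt] at hn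
    rw [hN1 (n+1) (by omega), hN2 (n+1) (by omega)]
    ring
  have hs2 : Summable (fun n : ℕ => ((A : ℝ) * (p : ℝ) ^ (n + 1) / 2)
      * (r1 (n + 1) + r2 (n + 1))) := by
    apply summable_of_ne_finset_zero (s := Finset.range (max N1 N2))
    intro n hn
    simp only [Finset.mem_range, not_lt] at hn
    rw [hN1 (n+1) (by omega), hN2 (n+1) (by omega)]
    ring
  have hsum_le := Summable.tsum_le_tsum hterm hs1 hs2
  have hfirst : ((Am1 : ℝ) + (a : ℝ)) * r1 0 + ((Aseq 0 : ℝ) - (Am1 : ℝ) - (a : ℝ)) * r2 0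
      ≤ ((A : ℝ) * ((p : ℝ) + 2) / (2 * (p : ℝ))) * r1 0 + ((A : ℝ) / 2) * r2 0 := by
    have hA0' : (Aseq 0 : ℝ) = (A:ℝ) + (Am1:ℝ) := by rw [hA0]; push_cast; ring
    have hrw : (A : ℝ) * ((p : ℝ) + 2) / (2 * (p : ℝ)) = (A:ℝ)/2 + (A:ℝ)/(p:ℝ) := by
      field_simp
    rw [hA0', hrw]
    have key1 : 0 ≤ ((A:ℝ)/(p:ℝ) - (Am1:ℝ)) * r1 0 :=
      mul_nonneg (by linarith) (hr1 0)
    have key2 : 0 ≤ ((A:ℝ)/2 - (a:ℝ)) * (r1 0 - r2 0) :=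
      mul_nonneg (by linarith) (by linarith [h21 0])
    nlinarith [key1, key2]
  linarith [hsum_le, hfirst]
end

section
/- Let Q be a positive-definite integer-valued quadratic form on the free ℤ-module L = ℤ⁵, let p be a prime, and suppose L = Λ₀ ⊕ Λ₁ is an internal direct sum of submodules with Λ₀ of rank 3 and Λ₁ of rank 2. Then there exists a constant c > 0, depending only on Q and the decomposition, such that for every integer n ≥ 0, every i ∈ {3,4,5}, and every ℤ-linearly independent family v₁, …, vᵢ of elements of the submodule pⁿΛ₀ + Λ₁, one has ∏_{j=1}^{i} Q(vⱼ) ≥ c·p^{2(i−2)n}. -/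
open Matrix

namespace SMLB

/-- cast an integer vector to a rational vector -/
def cv {m : ℕ} (v : Fin m → ℤ) : Fin m → ℚ := fun i => (v i : ℚ)

lemma cv_inj {m : ℕ} {v w : Fin m → ℤ} (h : cv v = cv w) : v = w := by
  funext i
  have := congrFun h i
  simp only [cv] at this
  exact_mod_cast this

lemma cv_zero {m : ℕ} : cv (0 : Fin m → ℤ) = 0 := by funext i; simp [cv]

lemma cv_add {m : ℕ} (v w : Fin m → ℤ) : cv (v + w) = cv v + cv w := by
  funext i; simp [cv]

lemma cv_smul {m : ℕ} (z : ℤ) (v : Fin m → ℤ) : cv (z • v) = (z : ℚ) • cv v := by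
  funext i; simp [cv]

lemma cv_dot {a b : ℕ} (A : Matrix (Fin a) (Fin b) ℤ) (v : Fin a → ℤ) (w : Fin b → ℤ) :
    cv v ⬝ᵥ (A.map (Int.cast : ℤ → ℚ)) *ᵥ cv w = ((v ⬝ᵥ A *ᵥ w : ℤ) : ℚ) := by
  simp only [dotProduct, Matrix.mulVec, Matrix.map_apply, cv]
  push_cast
  rfl

lemma cv_mulVec {a b : ℕ} (A : Matrix (Fin a) (Fin b) ℤ) (w : Fin b → ℤ) :
    (A.map (Int.cast : ℤ → ℚ)) *ᵥ cv w = cv (A *ᵥ w) := by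
  funext i
  simp only [Matrix.mulVec, dotProduct, Matrix.map_apply, cv]
  push_cast
  rfl

lemma mapZQ_mul {a b c : ℕ} (A : Matrix (Fin a) (Fin b) ℤ) (B : Matrix (Fin b) (Fin c) ℤ) :
    (A * B).map (Int.cast : ℤ → ℚ) = A.map Int.cast * B.map Int.cast := by
  ext i j
  simp only [Matrix.map_apply, Matrix.mul_apply]
  push_cast
  rfl

lemma mapZQ_transpose {a b : ℕ} (A : Matrix (Fin a) (Fin b) ℤ) :
    Aᵀ.map (Int.cast : ℤ → ℚ) = (A.map (Int.cast : ℤ → ℚ))ᵀ := Matrix.transpose_map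

lemma mapZQ_smul_one {a : ℕ} (D : ℤ) :
    (D • (1 : Matrix (Fin a) (Fin a) ℤ)).map (Int.cast : ℤ → ℚ)
      = (D : ℚ) • (1 : Matrix (Fin a) (Fin a) ℚ) := by
  ext i j
  simp only [Matrix.map_apply, Matrix.smul_apply, Matrix.one_apply, smul_eq_mul]
  split <;> push_cast <;> ring

lemma mapZQ_sub {a b : ℕ} (A B : Matrix (Fin a) (Fin b) ℤ) :
    (A - B).map (Int.cast : ℤ → ℚ) = A.map Int.cast - B.map Int.cast := by
  ext i j
  simp [Matrix.map_apply]

lemma dot_shift {a b : ℕ} (A : Matrix (Fin a) (Fin b) ℚ) (t : Fin b → ℚ) (x : Fin a → ℚ) :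
    (A *ᵥ t) ⬝ᵥ x = t ⬝ᵥ (Aᵀ *ᵥ x) := by
  simp only [dotProduct, Matrix.mulVec, Matrix.transpose_apply, Finset.sum_mul,
    Finset.mul_sum]
  rw [Finset.sum_comm]
  exact Finset.sum_congr rfl fun j _ => Finset.sum_congr rfl fun i _ => by ring

lemma denom_clear {m : ℕ} (x : Fin m → ℚ) :
    ∃ (d : ℕ) (z : Fin m → ℤ), 0 < d ∧ ∀ i, (z i : ℚ) = (d : ℚ) * x i := by
  classical
  set d := ∏ j, (x j).den with hd
  have hdpos : 0 < d := Finset.prod_pos fun i _ => (x i).den_pos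
  have key : ∀ i, ∃ z : ℤ, (z : ℚ) = (d : ℚ) * x i := by
    intro i
    obtain ⟨k, hk⟩ := Finset.dvd_prod_of_mem (fun j => (x j).den) (Finset.mem_univ i)
    refine ⟨(x i).num * k, ?_⟩
    have hden : ((x i).den : ℚ) ≠ 0 := by exact_mod_cast (x i).den_pos.ne'
    have hnum : ((x i).num : ℚ) = x i * (x i).den := by
      have h2 : x i * (x i).den = ((x i).num : ℚ) / ((x i).den) * (x i).den := by
        rw [Rat.num_div_den]
      rw [h2, div_mul_cancel₀ _ hden]
    rw [hd, hk]
    push_cast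
    rw [hnum]
    ring
  choose z hz using key
  exact ⟨d, z, hdpos, hz⟩

end SMLB

open SMLB Matrix

set_option maxHeartbeats 1000000 in
/-- Lemma 8.1 (lem_el), enlarged-lattice form: for a positive-definite integral
quadratic form `Q` on `ℤ⁵` and a direct-sum decomposition `ℤ⁵ = Λ₀ ⊕ Λ₁` with
`Λ₀` of rank 3 and `Λ₁` of rank 2, there is `c > 0` such that any `i` linearly
independent vectors (`i ∈ {3,4,5}`) of `pⁿΛ₀ + Λ₁` satisfy
`∏ Q(vⱼ) ≥ c·p^{2(i−2)n}`. -/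
theorem successive_minima_lower_bound
    (Q : QuadraticForm ℤ (Fin 5 → ℤ))
    (hQ : ∀ v : Fin 5 → ℤ, v ≠ 0 → 0 < Q v)
    (p : ℕ) (hp : p.Prime)
    (Λ₀ Λ₁ : Submodule ℤ (Fin 5 → ℤ))
    (hrank0 : Module.finrank ℤ Λ₀ = 3) (hrank1 : Module.finrank ℤ Λ₁ = 2)
    (hinf : Λ₀ ⊓ Λ₁ = ⊥) (hsup : Λ₀ ⊔ Λ₁ = ⊤) :
    ∃ c : ℝ, 0 < c ∧ ∀ n : ℕ, ∀ i : ℕ, (i = 3 ∨ i = 4 ∨ i = 5) →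
      ∀ v : Fin i → (Fin 5 → ℤ),
        (∀ j, ∃ u ∈ Λ₀, ∃ w ∈ Λ₁, v j = ((p : ℤ) ^ n) • u + w) →
        LinearIndependent ℤ v →
        c * (p : ℝ) ^ (2 * (i - 2) * n) ≤ ∏ j, (Q (v j) : ℝ) := by
  classical
  -- the (integral) matrix of the polar bilinear form of `Q`
  set Mz : Matrix (Fin 5) (Fin 5) ℤ :=
    LinearMap.BilinForm.toMatrix' (QuadraticMap.polarBilin Q) with hMz
  have hpolar : ∀ v w : Fin 5 → ℤ, QuadraticMap.polar Q v w = v ⬝ᵥ Mz *ᵥ w := by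
    intro v w
    have h1 := Matrix.toBilin'_toMatrix' (QuadraticMap.polarBilin Q)
    calc QuadraticMap.polar Q v w = QuadraticMap.polarBilin Q v w := rfl
      _ = Matrix.toBilin' Mz v w := by rw [hMz, h1]
      _ = v ⬝ᵥ Mz *ᵥ w := Matrix.toBilin'_apply' _ _ _
  have hq2 : ∀ v : Fin 5 → ℤ, v ⬝ᵥ Mz *ᵥ v = 2 * Q v := by
    intro v
    rw [← hpolar v v, QuadraticMap.polar_self, two_nsmul, two_mul]
  set Mq : Matrix (Fin 5) (Fin 5) ℚ := Mz.map (Int.cast : ℤ → ℚ) with hMq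
  set q : (Fin 5 → ℚ) → ℚ := fun x => x ⬝ᵥ Mq *ᵥ x with hqdef
  have hqcast : ∀ v : Fin 5 → ℤ, q (cv v) = ((2 * Q v : ℤ) : ℚ) := by
    intro v
    simp only [hqdef, hMq]
    rw [cv_dot, hq2]
  have hqpos : ∀ x : Fin 5 → ℚ, x ≠ 0 → 0 < q x := by
    intro x hx
    obtain ⟨d, z, hd, hz⟩ := denom_clear x
    have hzx : cv z = (d : ℚ) • x := funext fun i => by
      rw [Pi.smul_apply, smul_eq_mul]; exact hz i
    have hdq : (d : ℚ) ≠ 0 := by exact_mod_cast hd.ne'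
    have hzne : z ≠ 0 := by
      intro h
      rw [h, cv_zero] at hzx
      exact hx ((smul_eq_zero.mp hzx.symm).resolve_left hdq)
    have h1 : q (cv z) = ((2 * Q z : ℤ) : ℚ) := hqcast z
    have h2 : q (cv z) = (d : ℚ) ^ 2 * q x := by
      rw [hzx]
      simp only [hqdef]
      rw [Matrix.mulVec_smul, smul_dotProduct, dotProduct_smul, smul_eq_mul,
        smul_eq_mul]
      ring
    have h3 : (0 : ℚ) < ((2 * Q z : ℤ) : ℚ) := by
      have := hQ z hzne
      exact_mod_cast by linarith
    have h4 : (0 : ℚ) < (d : ℚ) ^ 2 := by positivity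
    nlinarith [h1, h2, h3, h4]
  have hqzero : q 0 = 0 := by simp [hqdef]
  have hqnonneg : ∀ x, 0 ≤ q x := by
    intro x
    by_cases h : x = 0
    · rw [h, hqzero]
    · exact (hqpos x h).le
  have hMzsymm : Mzᵀ = Mz := by
    ext i j
    rw [Matrix.transpose_apply, hMz, LinearMap.BilinForm.toMatrix'_apply,
      LinearMap.BilinForm.toMatrix'_apply]
    exact QuadraticMap.polar_comm _ _ _
  have hMqsymm : Mqᵀ = Mq := by
    rw [hMq, ← mapZQ_transpose, hMzsymm]
  have hsymdot : ∀ x z : Fin 5 → ℚ, x ⬝ᵥ Mq *ᵥ z = z ⬝ᵥ Mq *ᵥ x := by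
    intro x z
    calc x ⬝ᵥ Mq *ᵥ z = (Mq *ᵥ z) ⬝ᵥ x := dotProduct_comm _ _
      _ = z ⬝ᵥ (Mqᵀ *ᵥ x) := dot_shift _ _ _
      _ = z ⬝ᵥ Mq *ᵥ x := by rw [hMqsymm]
  -- a ℤ-basis of Λ₁
  obtain ⟨m, bY⟩ := Submodule.basisOfPid (Pi.basisFun ℤ (Fin 5)) Λ₁
  set y : Fin m → (Fin 5 → ℤ) := fun k => ((bY k : Λ₁) : Fin 5 → ℤ) with hy
  have hymem : ∀ k, y k ∈ Λ₁ := fun k => (bY k).2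
  have hyspan : ∀ w ∈ Λ₁, ∃ a : Fin m → ℤ, w = ∑ k, a k • y k := by
    intro w hw
    refine ⟨fun k => bY.repr ⟨w, hw⟩ k, ?_⟩
    have h1 := bY.sum_repr ⟨w, hw⟩
    calc w = ((⟨w, hw⟩ : Λ₁) : Fin 5 → ℤ) := rfl
      _ = ((∑ k, bY.repr ⟨w, hw⟩ k • bY k : Λ₁) : Fin 5 → ℤ) := by rw [h1]
      _ = ∑ k, bY.repr ⟨w, hw⟩ k • y k := by
          rw [AddSubmonoidClass.coe_finset_sum]
          exact Finset.sum_congr rfl fun k _ => rfl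
  -- linear independence of the basis over ℚ after casting
  have hyliZ : LinearIndependent ℤ y :=
    bY.linearIndependent.map' Λ₁.subtype Λ₁.ker_subtype
  set cvL : (Fin 5 → ℤ) →ₗ[ℤ] (Fin 5 → ℚ) :=
    { toFun := cv
      map_add' := cv_add
      map_smul' := fun z v => by simpa [Int.cast_smul_eq_zsmul] using cv_smul z v } with hcvL
  have hcvLker : LinearMap.ker cvL = ⊥ := by
    rw [LinearMap.ker_eq_bot]
    intro a b hab
    exact cv_inj hab
  have hyli : LinearIndependent ℚ (fun k => cv (y k)) := by
    have h1 : LinearIndependent ℤ (cvL ∘ y) := hyliZ.map' cvL hcvLker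
    exact (LinearIndependent.iff_fractionRing ℤ ℚ).mp h1
  -- matrices
  set Yz : Matrix (Fin 5) (Fin m) ℤ := fun i k => y k i with hYz
  have hYzmul : ∀ a : Fin m → ℤ, Yz *ᵥ a = ∑ k, a k • y k := by
    intro a
    funext i
    simp [hYz, Matrix.mulVec, dotProduct, Finset.sum_apply, mul_comm]
  set Y : Matrix (Fin 5) (Fin m) ℚ := Yz.map (Int.cast : ℤ → ℚ) with hY
  have hYmul : ∀ t : Fin m → ℚ, Y *ᵥ t = ∑ k, t k • cv (y k) := by
    intro t
    funext i
    simp [hY, hYz, Matrix.mulVec, dotProduct, Matrix.map_apply, cv, Finset.sum_apply,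
      mul_comm]
    rfl
  set Gz : Matrix (Fin m) (Fin m) ℤ := Yzᵀ * Mz * Yz with hGz
  set Gq : Matrix (Fin m) (Fin m) ℚ := Gz.map (Int.cast : ℤ → ℚ) with hGq
  have hGqY : Yᵀ * Mq * Y = Gq := by
    rw [hGq, hGz, mapZQ_mul, mapZQ_mul, mapZQ_transpose, ← hY, ← hMq]; rfl
  set D : ℤ := Gz.det with hD
  have hDcast : (D : ℚ) = Gq.det := by
    have h1 := RingHom.map_det (Int.castRingHom ℚ) Gz
    simpa [RingHom.mapMatrix_apply, hGq, hD] using h1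
  have hGqdet : Gq.det ≠ 0 := by
    intro h
    obtain ⟨t, htne, ht0⟩ := (Matrix.exists_mulVec_eq_zero_iff).mpr h
    have hqYt : q (Y *ᵥ t) = 0 := by
      simp only [hqdef]
      calc (Y *ᵥ t) ⬝ᵥ Mq *ᵥ (Y *ᵥ t)
          = t ⬝ᵥ (Yᵀ *ᵥ (Mq *ᵥ (Y *ᵥ t))) := dot_shift _ _ _
        _ = t ⬝ᵥ ((Yᵀ * (Mq * Y)) *ᵥ t) := by
            rw [Matrix.mulVec_mulVec, Matrix.mulVec_mulVec, Matrix.mul_assoc]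
        _ = t ⬝ᵥ (Gq *ᵥ t) := by rw [← Matrix.mul_assoc, hGqY]
        _ = 0 := by rw [ht0, dotProduct_zero]
    have hYt : Y *ᵥ t ≠ 0 := by
      intro h0
      apply htne
      rw [hYmul t] at h0
      have h2 := Fintype.linearIndependent_iff.mp hyli t h0
      funext k
      exact h2 k
    exact absurd hqYt (hqpos _ hYt).ne'
  have hDne : (D : ℚ) ≠ 0 := by rw [hDcast]; exact hGqdet
  have hD0 : D ≠ 0 := fun h => hDne (by rw [h]; norm_num)
  have hDu : IsUnit Gq.det := isUnit_iff_ne_zero.mpr hGqdet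
  -- the projection matrix
  set S : Matrix (Fin 5) (Fin 5) ℚ := Y * Gq⁻¹ * Yᵀ * Mq with hS
  set P : Matrix (Fin 5) (Fin 5) ℚ := 1 - S with hP
  have hYMP : Yᵀ * Mq * P = 0 := by
    rw [hP, Matrix.mul_sub, Matrix.mul_one, hS]
    simp only [← Matrix.mul_assoc]
    rw [hGqY, Matrix.mul_nonsing_inv _ hDu, Matrix.one_mul, sub_self]
  have hPY : P * Y = 0 := by
    rw [hP, Matrix.sub_mul, Matrix.one_mul, hS]
    simp only [Matrix.mul_assoc]
    rw [← Matrix.mul_assoc Yᵀ Mq Y]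
    rw [hGqY, Matrix.nonsing_inv_mul _ hDu, Matrix.mul_one, sub_self]
  have hSfact : S = Y * (Gq⁻¹ * Yᵀ * Mq) := by
    rw [hS]
    simp only [Matrix.mul_assoc]
  have hPSx : ∀ x : Fin 5 → ℚ, P *ᵥ x + S *ᵥ x = x := by
    intro x
    rw [hP, Matrix.sub_mulVec, Matrix.one_mulVec, sub_add_cancel]
  have hexpand : ∀ a r : Fin 5 → ℚ,
      q (a + r) = q a + q r + (a ⬝ᵥ Mq *ᵥ r + r ⬝ᵥ Mq *ᵥ a) := by
    intro a r
    simp only [hqdef]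
    rw [Matrix.mulVec_add, dotProduct_add, add_dotProduct, add_dotProduct]
    ring
  have hqP : ∀ x : Fin 5 → ℚ, q (P *ᵥ x) ≤ q x := by
    intro x
    have hra : (S *ᵥ x) ⬝ᵥ Mq *ᵥ (P *ᵥ x) = 0 := by
      have hr : S *ᵥ x = Y *ᵥ ((Gq⁻¹ * Yᵀ * Mq) *ᵥ x) := by
        rw [hSfact, ← Matrix.mulVec_mulVec]
      rw [hr, dot_shift, Matrix.mulVec_mulVec, Matrix.mulVec_mulVec,
        hYMP, Matrix.zero_mulVec, dotProduct_zero]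
    have har : (P *ᵥ x) ⬝ᵥ Mq *ᵥ (S *ᵥ x) = 0 := by
      rw [hsymdot]
      exact hra
    have e1 : q x = q (P *ᵥ x) + q (S *ᵥ x) := by
      conv_lhs => rw [← hPSx x]
      rw [hexpand, har, hra]
      ring
    have := hqnonneg (S *ᵥ x)
    linarith
  -- integrality of the projection, up to the factor D
  have hadjc : Gq.adjugate = Gz.adjugate.map (Int.cast : ℤ → ℚ) := by
    have h1 := RingHom.map_adjugate (Int.castRingHom ℚ) Gz
    simpa [RingHom.mapMatrix_apply, hGq] using h1.symm
  have hadj : (D : ℚ) • Gq⁻¹ = Gq.adjugate := by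
    rw [Matrix.inv_def, smul_smul, Ring.inverse_eq_inv', hDcast, mul_inv_cancel₀ hGqdet,
      one_smul]
  set Pz : Matrix (Fin 5) (Fin 5) ℤ := D • (1 : Matrix (Fin 5) (Fin 5) ℤ)
      - Yz * Gz.adjugate * Yzᵀ * Mz with hPz
  have hPzc : Pz.map (Int.cast : ℤ → ℚ) = (D : ℚ) • P := by
    rw [hPz, mapZQ_sub, mapZQ_smul_one, mapZQ_mul, mapZQ_mul, mapZQ_mul, mapZQ_transpose,
      ← hY, ← hMq, ← hadjc, ← hadj, hP, hS]
    rw [smul_sub]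
    congr 1
    show Y * (D : ℚ) • Gq⁻¹ * Yᵀ * Mq = (D : ℚ) • (Y * Gq⁻¹ * Yᵀ * Mq)
    rw [Matrix.mul_smul, Matrix.smul_mul, Matrix.smul_mul]
  have hPint : ∀ u : Fin 5 → ℤ, cv (Pz *ᵥ u) = (D : ℚ) • (P *ᵥ cv u) := by
    intro u
    rw [← cv_mulVec, hPzc, Matrix.smul_mulVec]
  have hqsmul : ∀ (c : ℚ) (x : Fin 5 → ℚ), q (c • x) = c ^ 2 * q x := by
    intro c x
    simp only [hqdef]
    rw [Matrix.mulVec_smul, smul_dotProduct, dotProduct_smul, smul_eq_mul,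
      smul_eq_mul]
    ring
  have hkey : ∀ (n : ℕ) (u : Fin 5 → ℤ), u ∈ Λ₀ → u ≠ 0 → ∀ wv ∈ Λ₁,
      ((p : ℚ)) ^ (2 * n) ≤ (D : ℚ) ^ 2 * ((Q ((p : ℤ) ^ n • u + wv) : ℤ) : ℚ) := by
    intro n u hu hu0 wv hwv
    -- the projection of `u` is nonzero
    have hPu : P *ᵥ cv u ≠ 0 := by
      intro h0
      have hx : cv u = S *ᵥ cv u := by
        conv_lhs => rw [← hPSx (cv u), h0, zero_add]
      have hx2 : cv u = Y *ᵥ ((Gq⁻¹ * Yᵀ * Mq) *ᵥ cv u) := by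
        conv_lhs => rw [hx]
        rw [hSfact, ← Matrix.mulVec_mulVec]
      obtain ⟨e, az, he, hez⟩ := denom_clear ((Gq⁻¹ * Yᵀ * Mq) *ᵥ cv u)
      have hec : ((e : ℕ) : ℚ) • ((Gq⁻¹ * Yᵀ * Mq) *ᵥ cv u) = cv az := by
        funext k
        show ((e : ℕ) : ℚ) * ((Gq⁻¹ * Yᵀ * Mq) *ᵥ cv u) k = ((az k : ℤ) : ℚ)
        exact (hez k).symm
      have h3 : cv ((e : ℤ) • u) = Y *ᵥ cv az := by
        rw [cv_smul]
        push_cast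
        conv_lhs => rw [hx2]
        rw [← Matrix.mulVec_smul, hec]
      have h4 : (e : ℤ) • u = Yz *ᵥ az := by
        apply cv_inj
        rw [h3, hY, cv_mulVec]
      have h5 : (e : ℤ) • u ∈ Λ₁ := by
        rw [h4, hYzmul]
        exact Submodule.sum_mem _ fun k _ => Submodule.smul_mem _ _ (hymem k)
      have h6 : (e : ℤ) • u ∈ Λ₀ := Submodule.smul_mem _ _ hu
      have h7 : (e : ℤ) • u = 0 := by
        have h8 : (e : ℤ) • u ∈ Λ₀ ⊓ Λ₁ := ⟨h6, h5⟩
        rw [hinf] at h8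
        simpa using h8
      have he' : (e : ℤ) ≠ 0 := by exact_mod_cast he.ne'
      exact hu0 ((smul_eq_zero.mp h7).resolve_left he')
    -- the projection kills `wv`
    obtain ⟨aw, haw⟩ := hyspan wv hwv
    have hwY : cv wv = Y *ᵥ cv aw := by
      rw [haw, ← hYzmul, hY, cv_mulVec]
    have hPw : P *ᵥ cv wv = 0 := by
      rw [hwY, Matrix.mulVec_mulVec, hPY, Matrix.zero_mulVec]
    -- the main chain of (in)equalities
    have hcv : cv ((p : ℤ) ^ n • u + wv) = ((p : ℚ)) ^ n • cv u + cv wv := by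
      rw [cv_add, cv_smul]
      push_cast
      rfl
    have hPv : P *ᵥ cv ((p : ℤ) ^ n • u + wv) = (p : ℚ) ^ n • (P *ᵥ cv u) := by
      rw [hcv, Matrix.mulVec_add, hPw, add_zero, Matrix.mulVec_smul]
    have h8 : q (P *ᵥ cv ((p : ℤ) ^ n • u + wv)) = (p : ℚ) ^ (2 * n) * q (P *ᵥ cv u) := by
      rw [hPv, hqsmul, ← pow_mul, Nat.mul_comm n 2]
    have hz := hPint u
    have hzne : Pz *ᵥ u ≠ 0 := by
      intro h
      have h9 : (D : ℚ) • (P *ᵥ cv u) = 0 := by rw [← hz, h, cv_zero]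
      exact hPu ((smul_eq_zero.mp h9).resolve_left hDne)
    have h9 : (2 : ℚ) ≤ (D : ℚ) ^ 2 * q (P *ᵥ cv u) := by
      have h10 : q (cv (Pz *ᵥ u)) = (D : ℚ) ^ 2 * q (P *ᵥ cv u) := by
        rw [hz, hqsmul]
      have h11 : q (cv (Pz *ᵥ u)) = ((2 * Q (Pz *ᵥ u) : ℤ) : ℚ) := hqcast _
      have h12 : (1 : ℤ) ≤ Q (Pz *ᵥ u) := hQ _ hzne
      have h13 : (1 : ℚ) ≤ ((Q (Pz *ᵥ u) : ℤ) : ℚ) := by exact_mod_cast h12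
      rw [← h10, h11]
      push_cast
      linarith
    have h13 : q (P *ᵥ cv ((p : ℤ) ^ n • u + wv)) ≤ q (cv ((p : ℤ) ^ n • u + wv)) := hqP _
    have h14 : q (cv ((p : ℤ) ^ n • u + wv)) = 2 * ((Q ((p : ℤ) ^ n • u + wv) : ℤ) : ℚ) := by
      rw [hqcast]
      push_cast
      ring
    have hp2 : (0 : ℚ) ≤ (p : ℚ) ^ (2 * n) := by positivity
    have hD2 : (0 : ℚ) ≤ (D : ℚ) ^ 2 := sq_nonneg _
    have h15 : (p : ℚ) ^ (2 * n) * 2 ≤ (p : ℚ) ^ (2 * n) * ((D : ℚ) ^ 2 * q (P *ᵥ cv u)) :=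
      mul_le_mul_of_nonneg_left h9 hp2
    have h16 := mul_le_mul_of_nonneg_left h13 hD2
    rw [h8, h14] at h16
    nlinarith [h15, h16]
  -- the constant
  have hDR : ((D : ℝ)) ≠ 0 := by exact_mod_cast hD0
  have hD2R : (0 : ℝ) < (D : ℝ) ^ 2 := by positivity
  set c0 : ℝ := ((D : ℝ) ^ 2)⁻¹ with hc0
  have hc0pos : 0 < c0 := by positivity
  have hD2ge1 : (1 : ℝ) ≤ (D : ℝ) ^ 2 := by
    have h1 : (1 : ℤ) ≤ D ^ 2 := by
      rcases lt_or_gt_of_ne hD0 with h | h <;> nlinarith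
    exact_mod_cast h1
  have hc0le1 : c0 ≤ 1 := by
    rw [hc0]
    exact inv_le_one_of_one_le₀ hD2ge1
  refine ⟨c0 ^ 5, by positivity, ?_⟩
  intro n i hi v hdec hli
  choose u hu w hw hv using hdec
  set T : Finset (Fin i) := Finset.univ.filter (fun j => u j = 0) with hT
  -- at most two of the vectors have vanishing Λ₀-component
  have hTcard : T.card ≤ 2 := by
    rw [← hrank1]
    have hmem : ∀ j : {x // x ∈ T}, v (j : Fin i) ∈ Λ₁ := by
      rintro ⟨j, hj⟩
      have h1 : u j = 0 := (Finset.mem_filter.mp hj).2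
      rw [hv j, h1, smul_zero, zero_add]
      exact hw j
    have hli2 : LinearIndependent ℤ (fun j : {x // x ∈ T} => v (j : Fin i)) :=
      hli.comp _ Subtype.coe_injective
    have hli3 : LinearIndependent ℤ (fun j : {x // x ∈ T} => (⟨v j, hmem j⟩ : Λ₁)) := by
      apply LinearIndependent.of_comp Λ₁.subtype
      exact hli2
    haveI : Module.Finite ℤ Λ₁ := Module.Finite.iff_fg.mpr (IsNoetherian.noetherian Λ₁)
    have := hli3.fintype_card_le_finrank
    simpa using this
  -- pointwise lower bounds
  have hone : ∀ j, (1 : ℝ) ≤ ((Q (v j) : ℤ) : ℝ) := by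
    intro j
    have hvne : v j ≠ 0 := hli.ne_zero j
    have h1 : (1 : ℤ) ≤ Q (v j) := hQ _ hvne
    exact_mod_cast h1
  have hbig : ∀ j ∉ T, c0 * (p : ℝ) ^ (2 * n) ≤ ((Q (v j) : ℤ) : ℝ) := by
    intro j hj
    have hune : u j ≠ 0 := by
      intro h
      exact hj (Finset.mem_filter.mpr ⟨Finset.mem_univ j, h⟩)
    have h1 := hkey n (u j) (hu j) hune (w j) (hw j)
    rw [← hv j] at h1
    have hR : ((p : ℝ)) ^ (2 * n) ≤ (D : ℝ) ^ 2 * ((Q (v j) : ℤ) : ℝ) := by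
      exact_mod_cast h1
    rw [hc0, inv_mul_le_iff₀ hD2R]
    exact hR
  -- assemble the product bound
  have hprod : ∏ j, (if j ∈ T then (1 : ℝ) else c0 * (p : ℝ) ^ (2 * n))
      ≤ ∏ j, ((Q (v j) : ℤ) : ℝ) := by
    apply Finset.prod_le_prod
    · intro j _
      split
      · norm_num
      · positivity
    · intro j _
      split
      · exact hone j
      · next h => exact hbig j h
  have hsplit : ∏ j, (if j ∈ T then (1 : ℝ) else c0 * (p : ℝ) ^ (2 * n))
      = (c0 * (p : ℝ) ^ (2 * n)) ^ ((Finset.univ \ T).card) := by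
    rw [Finset.prod_ite]
    simp [Finset.prod_const, Finset.filter_not, Finset.filter_mem_eq_inter,
      Finset.univ_inter]
  set k := (Finset.univ \ T).card with hk
  have hkcard : k = i - T.card := by
    rw [hk, Finset.card_sdiff_of_subset (Finset.subset_univ T), Finset.card_univ, Fintype.card_fin]
  have hk1 : i - 2 ≤ k := by
    rw [hkcard]
    omega
  have hk2 : k ≤ 5 := by
    have : k ≤ i := by rw [hkcard]; omega
    omega
  have hppos : (1 : ℝ) ≤ (p : ℝ) := by exact_mod_cast hp.one_lt.le
  have hpnn : (0 : ℝ) ≤ (p : ℝ) := by positivity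
  have hexp : 2 * (i - 2) * n ≤ 2 * n * k := by
    calc 2 * (i - 2) * n = 2 * ((i - 2) * n) := by ring
      _ ≤ 2 * (k * n) := Nat.mul_le_mul_left 2 (Nat.mul_le_mul_right n hk1)
      _ = 2 * n * k := by ring
  have hfinal : c0 ^ 5 * (p : ℝ) ^ (2 * (i - 2) * n) ≤ (c0 * (p : ℝ) ^ (2 * n)) ^ k := by
    rw [mul_pow, ← pow_mul]
    apply mul_le_mul
    · exact pow_le_pow_of_le_one hc0pos.le hc0le1 hk2
    · exact pow_le_pow_right₀ hppos hexp
    · positivity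
    · positivity
  calc c0 ^ 5 * (p : ℝ) ^ (2 * (i - 2) * n)
      ≤ (c0 * (p : ℝ) ^ (2 * n)) ^ k := hfinal
    _ = ∏ j, (if j ∈ T then (1 : ℝ) else c0 * (p : ℝ) ^ (2 * n)) := hsplit.symm
    _ ≤ ∏ j, ((Q (v j) : ℤ) : ℝ) := hprod
end

section
/- Let p be an odd prime, k a field of characteristic p, and λ ∈ k with λ^p = −λ and λ ≠ 0. Let G be the 2×2 matrix over k with rows (1/2, −λ/2) and (1/(2λ), −1/2), and for N ≥ 0 set P_N = G·G^{(1)}⋯G^{(N)}, where G^{(i)} is the matrix obtained from G by raising every entry to the p^i-th power. Then: (1) for every N ≥ 0, P_N ≠ 0, the kernel of P_N is one-dimensional and is spanned by a vector whose entries lie in F_{p²} (i.e. satisfy x^{p²} = x), and the kernel contains no nonzero vector both of whose entries are F_p-rational (i.e. satisfy x^p = x); (2) if N and M are nonnegative integers with N ≢ M (mod 2), then P_N is not a k-scalar multiple of P_M. -/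
private lemma ker_span_aux {K : Type*} [Field K] (M : Matrix (Fin 2) (Fin 2) K)
    (v : Fin 2 → K) (h00 : M 0 0 ≠ 0) (hv1 : v 1 = 1) (hMv : M.mulVec v = 0) :
    LinearMap.ker M.mulVecLin = Submodule.span K {v} := by
  apply le_antisymm
  · intro x hx
    rw [LinearMap.mem_ker, Matrix.mulVecLin_apply] at hx
    have e0 : M 0 0 * x 0 + M 0 1 * x 1 = 0 := by
      have h := congrFun hx 0
      simpa [Matrix.mulVec, dotProduct, Fin.sum_univ_two] using h
    have ev : M 0 0 * v 0 + M 0 1 = 0 := by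
      have h := congrFun hMv 0
      simpa [Matrix.mulVec, dotProduct, Fin.sum_univ_two, hv1] using h
    have hx0 : x 0 = v 0 * x 1 := by
      have h : M 0 0 * (x 0 - v 0 * x 1) = 0 := by linear_combination e0 - x 1 * ev
      have h' := (mul_eq_zero.mp h).resolve_left h00
      have := sub_eq_zero.mp h'
      exact this
    rw [Submodule.mem_span_singleton]
    refine ⟨x 1, funext fun j => ?_⟩
    fin_cases j
    · simp [hx0, mul_comm]
    · simp [hv1]
  · rw [Submodule.span_le, Set.singleton_subset_iff]
    simpa [LinearMap.mem_ker] using hMv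

private lemma no_rat_aux {K : Type*} [Field K] (p : ℕ) (μ : K) (hμ : μ ^ p = -μ)
    (hμ0 : μ ≠ 0) (h2 : (2:K) ≠ 0) (w : Fin 2 → K) (hw : ∀ j, w j ^ p = w j)
    (hrel : w 0 = μ * w 1) : w = 0 := by
  have h : -μ * w 1 = μ * w 1 := by
    have h := hw 0
    rw [hrel, mul_pow, hμ, hw 1] at h
    linear_combination h
  have h1 : w 1 = 0 := by
    have h2' : (2 * μ) * w 1 = 0 := by linear_combination -h
    rcases mul_eq_zero.mp h2' with h' | h'
    · exact absurd h' (mul_ne_zero h2 hμ0)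
    · exact h'
  funext j
  fin_cases j
  · simp [hrel, h1]
  · simp [h1]

/-- Lemma 5.4 (reallineartopleft): with `G = !![1/2, −λ/2; 1/(2λ), −1/2]` over a
field of characteristic `p` and `P_N = G·G^{(1)}⋯G^{(N)}` (Frobenius twists),
(1) `P_N ≠ 0`, its kernel is spanned by a nonzero vector with `𝔽_{p²}`-entries
and contains no nonzero `𝔽_p`-rational vector; (2) `P_N`, `P_M` are not scalar
multiples of each other when `N ≢ M (mod 2)`. -/
theorem frobenius_product_kernel
    (p : ℕ) (hp : p.Prime) (hp2 : p ≠ 2)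
    (k : Type*) [Field k] [CharP k p]
    (lam : k) (hlam : lam ^ p = -lam) (hlam0 : lam ≠ 0)
    (G : Matrix (Fin 2) (Fin 2) k)
    (hG : G = !![1/2, -lam/2; 1/(2*lam), -1/2])
    (P : ℕ → Matrix (Fin 2) (Fin 2) k)
    (hP : ∀ N, P N =
      ((List.range (N + 1)).map (fun i => G.map (fun x => x ^ p ^ i))).prod) :
    (∀ N, P N ≠ 0 ∧
      (∃ v : Fin 2 → k, v ≠ 0 ∧ (∀ j, v j ^ p ^ 2 = v j) ∧
        LinearMap.ker (Matrix.mulVecLin (P N)) = Submodule.span k {v}) ∧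
      (∀ w : Fin 2 → k, (∀ j, w j ^ p = w j) → (P N).mulVec w = 0 → w = 0)) ∧
    (∀ N M : ℕ, N % 2 ≠ M % 2 → ∀ c : k, P N ≠ c • P M) := by
  haveI := Fact.mk hp
  subst hG
  have hpodd : Odd p := hp.odd_of_ne_two hp2
  have h2ne : (2:k) ≠ 0 := by
    intro h
    have h' : ((2:ℕ):k) = 0 := by exact_mod_cast h
    have hd := (CharP.cast_eq_zero_iff k p 2).mp h'
    exact hp2 ((Nat.prime_dvd_prime_iff_eq hp Nat.prime_two).mp hd)
  have h2p : (2:k) ^ p = 2 := by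
    simpa [frobenius_def] using map_ofNat (frobenius k p) 2
  have hhalf : (1/2 : k) ^ p = 1/2 := by rw [div_pow, one_pow, h2p]
  have hlam2 : lam ^ p ^ 2 = lam := by
    rw [pow_two, pow_mul, hlam, hpodd.neg_pow, hlam, neg_neg]
  -- the two products that arise
  have hmap1 : (Matrix.map !![1/2, -lam/2; 1/(2*lam), -1/2] fun x => x ^ p)
      = !![1/2, lam/2; -(1/(2*lam)), -(1/2)] := by
    ext i j
    fin_cases i <;> fin_cases j <;>
      simp [Matrix.map_apply, h2p, hpodd.neg_pow, hlam, mul_pow, div_pow, inv_pow,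
        inv_neg, neg_div]
  have hmap2 : (Matrix.map !![1/2, lam/2; -(1/(2*lam)), -(1/2)] fun x => x ^ p)
      = !![1/2, -lam/2; 1/(2*lam), -1/2] := by
    ext i j
    fin_cases i <;> fin_cases j <;>
      simp [Matrix.map_apply, h2p, hpodd.neg_pow, hlam, mul_pow, div_pow, inv_pow,
        inv_neg, neg_div]
  have hT : ∀ i, (Matrix.map !![1/2, -lam/2; 1/(2*lam), -1/2] fun x => x ^ p ^ i)
      = if i % 2 = 0 then !![1/2, -lam/2; 1/(2*lam), -1/2]
        else !![1/2, lam/2; -(1/(2*lam)), -(1/2)] := by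
    intro i
    induction i with
    | zero => simp
    | succ i ih =>
      have hcomp : (Matrix.map !![1/2, -lam/2; 1/(2*lam), -1/2] fun x => x ^ p ^ (i+1))
          = Matrix.map (Matrix.map !![1/2, -lam/2; 1/(2*lam), -1/2] fun x => x ^ p ^ i)
              (fun x => x ^ p) := by
        ext a b
        simp only [Matrix.map_apply, pow_succ, pow_mul]
      rw [hcomp, ih]
      rcases Nat.mod_two_eq_zero_or_one i with h | h
      · rw [if_pos h, hmap1, if_neg (by omega)]
      · rw [if_neg (by omega), hmap2, if_pos (by omega)]
  have hGG1 : !![1/2, -lam/2; 1/(2*lam), -1/2] * !![1/2, lam/2; -(1/(2*lam)), -(1/2)]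
      = !![1/2, lam/2; 1/(2*lam), 1/2] := by
    ext i j
    fin_cases i <;> fin_cases j <;>
      simp [Matrix.mul_apply, Fin.sum_univ_two] <;> field_simp <;> ring
  have hQG : !![1/2, lam/2; 1/(2*lam), 1/2] * !![1/2, -lam/2; 1/(2*lam), -1/2]
      = !![1/2, -lam/2; 1/(2*lam), -1/2] := by
    ext i j
    fin_cases i <;> fin_cases j <;>
      simp [Matrix.mul_apply, Fin.sum_univ_two] <;> field_simp <;> ring
  have hPN : ∀ N, P N = if N % 2 = 0 then !![1/2, -lam/2; 1/(2*lam), -1/2]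
      else !![1/2, lam/2; 1/(2*lam), 1/2] := by
    intro N
    induction N with
    | zero =>
      rw [hP 0, if_pos (by norm_num), show List.range 1 = [0] from rfl]
      simp only [List.map_cons, List.map_nil, List.prod_cons,
        List.prod_nil, mul_one, pow_zero, pow_one]
      ext i j
      simp [Matrix.map_apply]
    | succ N ih =>
      have hstep : P (N+1) = P N *
          (Matrix.map !![1/2, -lam/2; 1/(2*lam), -1/2] fun x => x ^ p ^ (N+1)) := by
        rw [hP (N+1), hP N, List.range_succ, List.map_append, List.prod_append]
        simp
      rw [hstep, ih, hT (N+1)]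
      rcases Nat.mod_two_eq_zero_or_one N with h | h
      · rw [if_pos h, if_neg (by omega), if_neg (by omega), hGG1]
      · rw [if_neg (by omega), if_pos (by omega), if_pos (by omega), hQG]
  have hhalf_ne : (1/2 : k) ≠ 0 := one_div_ne_zero h2ne
  constructor
  · intro N
    rcases Nat.mod_two_eq_zero_or_one N with hN | hN
    · have hPNG : P N = !![1/2, -lam/2; 1/(2*lam), -1/2] := by rw [hPN N, if_pos hN]
      refine ⟨?_, ⟨![lam, 1], ?_, ?_, ?_⟩, ?_⟩
      · rw [hPNG]
        intro h
        have h0 := congrFun (congrFun h 0) 0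
        simp at h0
        exact hhalf_ne (by simpa using h0)
      · intro h
        have := congrFun h 1
        simp at this
      · intro j
        fin_cases j
        · simpa using hlam2
        · simp
      · rw [hPNG]
        apply ker_span_aux
        · simpa using hhalf_ne
        · simp
        · funext j
          fin_cases j <;>
            simp [Matrix.mulVec, dotProduct, Fin.sum_univ_two] <;>
            field_simp <;> ring
      · intro w hw hwv
        rw [hPNG] at hwv
        have hrow : (1/2 : k) * w 0 + (-lam/2) * w 1 = 0 := by
          have := congrFun hwv 0
          simpa [Matrix.mulVec, dotProduct, Fin.sum_univ_two] using this
        have hrel : w 0 = lam * w 1 := by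
          field_simp at hrow
          linear_combination hrow
        exact no_rat_aux p lam hlam hlam0 h2ne w hw hrel
    · have hPNQ : P N = !![1/2, lam/2; 1/(2*lam), 1/2] := by
        rw [hPN N, if_neg (by omega)]
      have hmu : (-lam) ^ p = -(-lam) := by rw [hpodd.neg_pow, hlam]
      refine ⟨?_, ⟨![-lam, 1], ?_, ?_, ?_⟩, ?_⟩
      · rw [hPNQ]
        intro h
        have h0 := congrFun (congrFun h 0) 0
        simp at h0
        exact hhalf_ne (by simpa using h0)
      · intro h
        have := congrFun h 1
        simp at this
      · intro j
        fin_cases j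
        · show (-lam) ^ p ^ 2 = -lam
          rw [Odd.neg_pow hpodd.pow, hlam2]
        · simp
      · rw [hPNQ]
        apply ker_span_aux
        · simpa using hhalf_ne
        · simp
        · funext j
          fin_cases j <;>
            simp [Matrix.mulVec, dotProduct, Fin.sum_univ_two] <;>
            field_simp <;> ring
      · intro w hw hwv
        rw [hPNQ] at hwv
        have hrow : (1/2 : k) * w 0 + (lam/2) * w 1 = 0 := by
          have := congrFun hwv 0
          simpa [Matrix.mulVec, dotProduct, Fin.sum_univ_two] using this
        have hrel : w 0 = (-lam) * w 1 := by
          field_simp at hrow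
          linear_combination hrow
        exact no_rat_aux p (-lam) hmu (neg_ne_zero.mpr hlam0) h2ne w hw hrel
  · intro N M hNM c hc
    rw [hPN N, hPN M] at hc
    rcases Nat.mod_two_eq_zero_or_one N with hN | hN <;>
      rcases Nat.mod_two_eq_zero_or_one M with hM | hM
    · omega
    · rw [if_pos hN, if_neg (by omega)] at hc
      have e0 := congrFun (congrFun hc 0) 0
      have e1 := congrFun (congrFun hc 0) 1
      simp [Matrix.smul_apply, smul_eq_mul] at e0 e1
      have hc1 : c = 1 := by
        field_simp at e0
        exact e0.symm
      rw [hc1, one_mul] at e1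
      have hz : (2:k) * ((2:k) * lam) = 0 := by
        field_simp at e1
        linear_combination (-2*lam) * e1
      rcases mul_eq_zero.mp hz with h' | h'
      · exact h2ne h'
      · rcases mul_eq_zero.mp h' with h'' | h''
        · exact h2ne h''
        · exact hlam0 h''
    · rw [if_neg (by omega), if_pos hM] at hc
      have e0 := congrFun (congrFun hc 0) 0
      have e1 := congrFun (congrFun hc 0) 1
      simp [Matrix.smul_apply, smul_eq_mul] at e0 e1
      have hc1 : c = 1 := by
        field_simp at e0
        exact e0.symm
      rw [hc1, one_mul] at e1
      have hz : (2:k) * ((2:k) * lam) = 0 := by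
        field_simp at e1
        linear_combination (2*lam) * e1
      rcases mul_eq_zero.mp hz with h' | h'
      · exact h2ne h'
      · rcases mul_eq_zero.mp h' with h'' | h''
        · exact h2ne h''
        · exact hlam0 h''
    · omega
end

section
/- Let p be an odd prime and let a, e, n be integers with a ≥ 1 and 1 ≤ e ≤ n. For integers 0 ≤ k ≤ n+1 define f(k) = a·( (1 + p^{2e})·(p^k − 1)/(p − 1) + p^k·(p^{2(n−k+1)} − 1)/(p − 1) ). Then f(n − e + 1) < f(k) for every k ∈ {0, 1, …, n+1} with k ≠ n − e + 1. -/
lemma geom_mul (p : ℕ) (hp : 1 ≤ p) (t : ℕ) :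
    (p - 1) * ∑ i ∈ Finset.range t, p ^ i = p ^ t - 1 := by
  induction t with
  | zero => simp
  | succ t ih =>
    rw [Finset.sum_range_succ, Nat.mul_add, ih, pow_succ]
    have h1 : 1 ≤ p ^ t := Nat.one_le_pow _ _ hp
    have h2 : (p - 1) * p ^ t = p * p ^ t - p ^ t := by
      rw [Nat.sub_mul, one_mul]
    have h3 : p ^ t ≤ p * p ^ t := Nat.le_mul_of_pos_left _ (by omega)
    have h4 : p ^ t * p = p * p ^ t := Nat.mul_comm _ _
    omega

lemma inner_eq (p : ℕ) (hp : 1 ≤ p) (e m k : ℕ) (hk : k ≤ m) :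
    (1 + p ^ (2 * e)) * (p ^ k - 1) + p ^ k * (p ^ (2 * (m - k)) - 1)
      + (1 + p ^ (2 * e)) = p ^ (k + 2 * e) + p ^ (2 * m - k) := by
  obtain ⟨A, hA⟩ := Nat.exists_eq_add_of_le (Nat.one_le_pow k p hp)
  obtain ⟨B, hB⟩ := Nat.exists_eq_add_of_le (Nat.one_le_pow (2 * (m - k)) p hp)
  have h1 : p ^ (k + 2 * e) = p ^ k * p ^ (2 * e) := pow_add p k (2 * e)
  have h2 : p ^ (2 * m - k) = p ^ k * p ^ (2 * (m - k)) := by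
    rw [← pow_add]
    congr 1
    omega
  have hA' : p ^ k - 1 = A := by omega
  have hB' : p ^ (2 * (m - k)) - 1 = B := by omega
  rw [h1, h2, hA', hB', hA, hB]
  ring

lemma amgm (p : ℕ) (hp : 2 ≤ p) (s x y : ℕ) (hxy : x + y = 2 * s) (hne : x ≠ y) :
    2 * p ^ s < p ^ x + p ^ y := by
  wlog hlt : x < y generalizing x y
  · rw [add_comm (p ^ x)]
    exact this y x (by omega) (Ne.symm hne) (by omega)
  have hd : x < s := by omega
  have hy : y = s + (s - x) := by omega
  have hs : s = x + (s - x) := by omega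
  set d := s - x with hdd
  have hd1 : 1 ≤ d := by omega
  have hq : 2 ≤ p ^ d := by
    calc 2 = 2 ^ 1 := by norm_num
    _ ≤ p ^ d := Nat.pow_le_pow_left hp 1 |>.trans (Nat.pow_le_pow_right (by omega) hd1)
  have hx1 : 1 ≤ p ^ x := Nat.one_le_pow _ _ (by omega)
  have key : 2 * p ^ d < 1 + p ^ d * p ^ d := by nlinarith
  calc 2 * p ^ s = p ^ x * (2 * p ^ d) := by rw [hs, pow_add]; ring
  _ < p ^ x * (1 + p ^ d * p ^ d) :=
      mul_lt_mul_of_pos_left key (by positivity)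
  _ = p ^ x + p ^ y := by rw [hy, pow_add, hs, pow_add]; ring

/-- Lemma 5.7(1) (realdecaytopleft), arithmetic content: the function
`f(k) = a((1+p^{2e})·(1+p+⋯+p^{k−1}) + p^k·(1+p+⋯+p^{2(n−k+1)−1}))` on
`{0,…,n+1}` has a strict unique minimum at `k = n−e+1`. -/
theorem valuation_minimized
    (p : ℕ) (hp : p.Prime) (hp2 : p ≠ 2)
    (a e n : ℕ) (ha : 1 ≤ a) (he1 : 1 ≤ e) (hen : e ≤ n)
    (f : ℕ → ℕ)
    (hf : ∀ k, f k = a * ((1 + p ^ (2 * e)) * (∑ i ∈ Finset.range k, p ^ i)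
        + p ^ k * (∑ i ∈ Finset.range (2 * (n + 1 - k)), p ^ i))) :
    ∀ k : ℕ, k ≤ n + 1 → k ≠ n + 1 - e → f (n + 1 - e) < f k := by
  intro k hk hne
  have hp1 : 2 ≤ p := hp.two_le
  set m := n + 1 with hm
  have key : ∀ j, j ≤ m → (p - 1) * f j + a * (1 + p ^ (2 * e))
      = a * (p ^ (j + 2 * e) + p ^ (2 * m - j)) := by
    intro j hj
    rw [hf j]
    have e1 : (p - 1) * (a * ((1 + p ^ (2 * e)) * (∑ i ∈ Finset.range j, p ^ i)
          + p ^ j * (∑ i ∈ Finset.range (2 * (m - j)), p ^ i)))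
        = a * ((1 + p ^ (2 * e)) * ((p - 1) * ∑ i ∈ Finset.range j, p ^ i)
          + p ^ j * ((p - 1) * ∑ i ∈ Finset.range (2 * (m - j)), p ^ i)) := by ring
    rw [e1, geom_mul p (by omega), geom_mul p (by omega), ← Nat.mul_add,
      inner_eq p (by omega) e m j hj]
  have h0 : m - e ≤ m := Nat.sub_le _ _
  have h1 := key (m - e) h0
  have h2 := key k hk
  have core : 2 * p ^ (m + e) < p ^ (k + 2 * e) + p ^ (2 * m - k) :=
    amgm p hp1 (m + e) (k + 2 * e) (2 * m - k) (by omega) (by omega)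
  have e2 : m - e + 2 * e = m + e := by omega
  have e3 : 2 * m - (m - e) = m + e := by omega
  rw [e2, e3] at h1
  have hlt : a * (p ^ (m + e) + p ^ (m + e)) < a * (p ^ (k + 2 * e) + p ^ (2 * m - k)) := by
    have : p ^ (m + e) + p ^ (m + e) = 2 * p ^ (m + e) := by ring
    rw [this]
    exact mul_lt_mul_of_pos_left core (by omega)
  have hfin : (p - 1) * f (m - e) < (p - 1) * f k := by omega
  exact Nat.lt_of_mul_lt_mul_left hfin
end

section
/- Let p be an odd prime and let A, B, g be positive integers. For integers n ≥ 0 and 0 ≤ f ≤ n, define v(f) = A·∑_{i=0}^{n−f−1} p^i + B·∑_{j=0}^{f−1} p^{n−f+2j} + g·p^{n+f}. If 0 ≤ f₁ < f₂ ≤ n with f₂ > f₁ + 1 and v(f₁) = v(f₂), then v(f₂) > v(f₂ − 1). Consequently, if the minimum of v over {0, 1, …, n} is attained at two distinct values f₁ < f₂, then f₂ = f₁ + 1; i.e. the minimum occurs at most twice, and if twice then at consecutive values of f. -/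
lemma helper_le (p x : ℕ) (hp : 1 ≤ p) : 2 * (x * p) ≤ x + x * p ^ 2 := by
  have h : 2 * p ≤ 1 + p ^ 2 := by nlinarith
  calc 2 * (x * p) = x * (2 * p) := by ring
    _ ≤ x * (1 + p ^ 2) := Nat.mul_le_mul_left x h
    _ = x + x * p ^ 2 := by ring

lemma helper_lt (p x : ℕ) (hp : 2 ≤ p) (hx : 0 < x) : 2 * (x * p) < x + x * p ^ 2 := by
  have h : 2 * p < 1 + p ^ 2 := by nlinarith
  calc 2 * (x * p) = x * (2 * p) := by ring
    _ < x * (1 + p ^ 2) := mul_lt_mul_of_pos_left h hx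
    _ = x + x * p ^ 2 := by ring

lemma step_le (p e : ℕ) (hp : 1 ≤ p) : 2 * p ^ (e + 1) ≤ p ^ e + p ^ (e + 2) := by
  have h := helper_le p (p ^ e) hp
  calc 2 * p ^ (e + 1) = 2 * (p ^ e * p) := by rw [pow_succ]
    _ ≤ p ^ e + p ^ e * p ^ 2 := h
    _ = p ^ e + p ^ (e + 2) := by rw [pow_add]

lemma step_lt (p e : ℕ) (hp : 2 ≤ p) : 2 * p ^ (e + 1) < p ^ e + p ^ (e + 2) := by
  have h := helper_lt p (p ^ e) hp (pow_pos (by omega) e)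
  calc 2 * p ^ (e + 1) = 2 * (p ^ e * p) := by rw [pow_succ]
    _ < p ^ e + p ^ e * p ^ 2 := h
    _ = p ^ e + p ^ (e + 2) := by rw [pow_add]

/-- Lemma 6.5 (consec): for
`v(f) = A(1+p+⋯+p^{n−f−1}) + B(p^{n−f}+p^{n−f+2}+⋯+p^{n+f−2}) + g·p^{n+f}`,
if `v(f₁) = v(f₂)` with `f₁ + 1 < f₂ ≤ n` then `v(f₂) > v(f₂−1)`; consequently
the minimum of `v` on `{0,…,n}` is attained at most twice, and if twice then at
consecutive values. -/
theorem min_occurs_consecutively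
    (p : ℕ) (hp : p.Prime) (hp2 : p ≠ 2)
    (A B g : ℕ) (hA : 0 < A) (hB : 0 < B) (hg : 0 < g)
    (n : ℕ) (v : ℕ → ℕ)
    (hv : ∀ f, v f = A * (∑ i ∈ Finset.range (n - f), p ^ i)
        + B * (∑ j ∈ Finset.range f, p ^ (n - f + 2 * j))
        + g * p ^ (n + f)) :
    (∀ f₁ f₂, f₁ < f₂ → f₂ ≤ n → f₁ + 1 < f₂ → v f₁ = v f₂ → v (f₂ - 1) < v f₂) ∧
    (∀ f₁ f₂, f₁ < f₂ → f₂ ≤ n →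
      (∀ f, f ≤ n → v f₁ ≤ v f) → (∀ f, f ≤ n → v f₂ ≤ v f) → f₂ = f₁ + 1) := by
  have hp1 : 1 ≤ p := hp.one_lt.le
  have hp2' : 2 ≤ p := hp.two_le
  -- strict convexity
  have conv : ∀ f, f + 2 ≤ n → 2 * v (f + 1) < v f + v (f + 2) := by
    intro f hf
    obtain ⟨m, rfl⟩ : ∃ m, n = m + f + 2 := ⟨n - f - 2, by omega⟩
    rw [hv f, hv (f + 1), hv (f + 2)]
    have e0 : m + f + 2 - f = m + 2 := by omega
    have e1 : m + f + 2 - (f + 1) = m + 1 := by omega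
    have e2 : m + f + 2 - (f + 2) = m := by omega
    have eg0 : m + f + 2 + f = m + 2 * f + 2 := by ring
    have eg1 : m + f + 2 + (f + 1) = m + 2 * f + 3 := by ring
    have eg2 : m + f + 2 + (f + 2) = m + 2 * f + 4 := by ring
    rw [e0, e1, e2, eg0, eg1, eg2]
    set Sm := ∑ i ∈ Finset.range m, p ^ i with hSm
    set T0 := ∑ j ∈ Finset.range f, p ^ (m + 2 * j) with hT0
    set T1 := ∑ j ∈ Finset.range f, p ^ (m + 1 + 2 * j) with hT1
    set T2 := ∑ j ∈ Finset.range f, p ^ (m + 2 + 2 * j) with hT2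
    have hA2 : ∑ i ∈ Finset.range (m + 2), p ^ i = Sm + p ^ m + p ^ (m + 1) := by
      rw [Finset.sum_range_succ, Finset.sum_range_succ]
    have hA1 : ∑ i ∈ Finset.range (m + 1), p ^ i = Sm + p ^ m := Finset.sum_range_succ _ _
    have hB1 : ∑ j ∈ Finset.range (f + 1), p ^ (m + 1 + 2 * j)
        = T1 + p ^ (m + 2 * f + 1) := by
      rw [Finset.sum_range_succ, show m + 1 + 2 * f = m + 2 * f + 1 from by ring]
    have hB2 : ∑ j ∈ Finset.range (f + 2), p ^ (m + 2 * j)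
        = T0 + p ^ (m + 2 * f) + p ^ (m + 2 * f + 2) := by
      rw [Finset.sum_range_succ, Finset.sum_range_succ,
        show m + 2 * (f + 1) = m + 2 * f + 2 from by ring]
    rw [hA2, hA1, hB1, hB2]
    -- inequalities feeding linarith
    have hApow : A * p ^ m ≤ A * p ^ (m + 1) :=
      Nat.mul_le_mul_left A (Nat.pow_le_pow_right hp1 (Nat.le_succ m))
    have hTsum : 2 * T1 ≤ T0 + T2 := by
      rw [hT0, hT1, hT2, Finset.mul_sum, ← Finset.sum_add_distrib]
      refine Finset.sum_le_sum fun j _ => ?_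
      rw [show m + 1 + 2 * j = m + 2 * j + 1 from by ring,
        show m + 2 + 2 * j = m + 2 * j + 2 from by ring]
      exact step_le p (m + 2 * j) hp1
    have hBT : B * (2 * T1) ≤ B * (T0 + T2) := Nat.mul_le_mul_left B hTsum
    have hBend : B * (2 * p ^ (m + 2 * f + 1))
        ≤ B * (p ^ (m + 2 * f) + p ^ (m + 2 * f + 2)) := by
      refine Nat.mul_le_mul_left B ?_
      exact step_le p (m + 2 * f) hp1
    have hgend : g * (2 * p ^ (m + 2 * f + 3))
        < g * (p ^ (m + 2 * f + 2) + p ^ (m + 2 * f + 4)) := by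
      refine mul_lt_mul_of_pos_left ?_ hg
      rw [show (m + 2 * f + 3 : ℕ) = (m + 2 * f + 2) + 1 from rfl,
        show (m + 2 * f + 4 : ℕ) = (m + 2 * f + 2) + 2 from rfl]
      exact step_lt p (m + 2 * f + 2) hp2'
    nlinarith [hApow, hBT, hBend, hgend]
  -- downward propagation of decrease
  have dec : ∀ d f, f + 2 ≤ n → d ≤ f → v (f + 2) ≤ v (f + 1) → v (f + 1) < v (f - d) := by
    intro d
    induction d with
    | zero =>
      intro f hf _ hle
      have := conv f hf
      simpa using (by omega : v (f + 1) < v f)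
    | succ d ih =>
      intro f hf hd hle
      have h0 : v (f + 1) < v f := by have := conv f hf; omega
      have h2 := ih (f - 1) (by omega) (by omega) (by
        rw [show f - 1 + 2 = f + 1 from by omega, show f - 1 + 1 = f from by omega]
        exact h0.le)
      rw [show f - 1 + 1 = f from by omega] at h2
      rw [show f - (d + 1) = f - 1 - d from by omega]
      exact h0.trans h2
  have key : ∀ f₁ f₂, f₁ < f₂ → f₂ ≤ n → f₁ + 1 < f₂ → v f₁ = v f₂ → v (f₂ - 1) < v f₂ := by
    intro f₁ f₂ hlt hle hgap heq
    by_contra hcon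
    push_neg at hcon
    have hle2 : v (f₂ - 2 + 2) ≤ v (f₂ - 2 + 1) := by
      rw [show f₂ - 2 + 2 = f₂ from by omega, show f₂ - 2 + 1 = f₂ - 1 from by omega]
      exact hcon
    have h := dec (f₂ - 2 - f₁) (f₂ - 2) (by omega) (by omega) hle2
    rw [show f₂ - 2 + 1 = f₂ - 1 from by omega,
      show f₂ - 2 - (f₂ - 2 - f₁) = f₁ from by omega] at h
    omega
  refine ⟨key, ?_⟩
  intro f₁ f₂ hlt hle hmin1 hmin2
  by_contra hne
  have hgap : f₁ + 1 < f₂ := by omega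
  have heq : v f₁ = v f₂ := le_antisymm (hmin1 f₂ hle) (hmin2 f₁ (by omega))
  have h1 := key f₁ f₂ hlt hle hgap heq
  have h2 := hmin2 (f₂ - 1) (by omega)
  omega
end

section
/- Let p be an odd prime, and let A, B, a, b, c be positive integers with a + b = 2c, a ≠ b, and A ≥ B ≥ p + 1. Fix an integer n ≥ 1 and, for a positive integer g and an integer 0 ≤ f ≤ n, define v_g(f) = A·∑_{i=0}^{n−f−1} p^i + B·∑_{j=0}^{f−1} p^{n−f+2j} + g·p^{n+f}. Then there do NOT exist integers f_a, f_b, f_c with 1 ≤ f_a, f_b, f_c ≤ n such that v_a(f_a) = v_a(f_a − 1), v_b(f_b) = v_b(f_b − 1), and v_c(f_c) = v_c(f_c − 1) hold simultaneously. Equivalently, at most two of the three numbers g ∈ {a, b, c} admit an integer f with v_g(f) = v_g(f − 1). -/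
private lemma no_pow_sum' (p : ℕ) (hp3 : 3 ≤ p) (x y z : ℕ) (hyz : y < z)
    (h : 2 * p ^ x = p ^ y + p ^ z) : False := by
  obtain ⟨d, rfl⟩ : ∃ d, z = y + (d + 1) := ⟨z - y - 1, by omega⟩
  have hp1 : 1 < p := by omega
  rw [pow_add] at h
  have hpy : 0 < p ^ y := Nat.pow_pos (by omega)
  have hd1 : p ≤ p ^ (d + 1) := by
    calc p = p ^ 1 := (pow_one p).symm
    _ ≤ p ^ (d + 1) := Nat.pow_le_pow_right (by omega) (by omega)
  have hlt : p ^ y < p ^ x := by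
    have h2 : p ^ y * p ≤ p ^ y * p ^ (d + 1) := Nat.mul_le_mul_left _ hd1
    nlinarith
  have hxy : y < x := (Nat.pow_lt_pow_iff_right hp1).mp hlt
  obtain ⟨e, rfl⟩ : ∃ e, x = y + (e + 1) := ⟨x - y - 1, by omega⟩
  rw [pow_add] at h
  have h' : 2 * p ^ (e + 1) = 1 + p ^ (d + 1) := by
    apply Nat.eq_of_mul_eq_mul_left hpy
    ring_nf
    ring_nf at h
    linarith
  have hdvd : p ∣ 1 + p ^ (d + 1) := by
    rw [← h']
    exact Dvd.dvd.mul_left (dvd_pow_self p (Nat.succ_ne_zero e)) 2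
  rw [add_comm] at hdvd
  have : p ∣ 1 := (Nat.dvd_add_right (dvd_pow_self p (Nat.succ_ne_zero d))).mp hdvd
  have := Nat.le_of_dvd one_pos this
  omega

private lemma no_pow_sum (p : ℕ) (hp3 : 3 ≤ p) (x y z : ℕ) (hyz : y ≠ z)
    (h : 2 * p ^ x = p ^ y + p ^ z) : False := by
  rcases lt_or_gt_of_ne hyz with h1 | h1
  · exact no_pow_sum' p hp3 x y z h1 h
  · exact no_pow_sum' p hp3 x z y h1 (by omega)

private lemma key (p A B n : ℕ) (hp : 2 ≤ p) (v : ℕ → ℕ → ℕ)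
    (hv : ∀ g f, v g f = A * (∑ i ∈ Finset.range (n - f), p ^ i)
        + B * (∑ j ∈ Finset.range f, p ^ (n - f + 2 * j))
        + g * p ^ (n + f))
    (g f : ℕ) (hf1 : 1 ≤ f) (hfn : f ≤ n) (h : v g f = v g (f - 1)) :
    ∃ k, f = k + 1 ∧
      A + (B * p * (∑ j ∈ Finset.range k, p ^ (2 * j)) + g * p ^ (2 * k + 1))
        = B + p * (B * p * (∑ j ∈ Finset.range k, p ^ (2 * j)) + g * p ^ (2 * k + 1)) := by
  obtain ⟨k, rfl⟩ : ∃ k, f = k + 1 := ⟨f - 1, by omega⟩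
  obtain ⟨m, rfl⟩ : ∃ m, n = m + (k + 1) := ⟨n - (k + 1), by omega⟩
  refine ⟨k, rfl, ?_⟩
  rw [hv, hv] at h
  simp only [Nat.add_sub_cancel, show k + 1 - 1 = k from rfl,
    show m + (k + 1) - k = m + 1 by omega,
    show m + (k + 1) + (k + 1) = m + (2 * k + 2) by omega,
    show m + (k + 1) + k = m + (2 * k + 1) by omega] at h
  have hZ : (A : ℤ) * ∑ i ∈ Finset.range m, (p : ℤ) ^ i
      + B * ∑ j ∈ Finset.range (k + 1), (p : ℤ) ^ (m + 2 * j)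
      + g * (p : ℤ) ^ (m + (2 * k + 2))
      = A * ∑ i ∈ Finset.range (m + 1), (p : ℤ) ^ i
      + B * ∑ j ∈ Finset.range k, (p : ℤ) ^ (m + 1 + 2 * j)
      + g * (p : ℤ) ^ (m + (2 * k + 1)) := by exact_mod_cast h
  have e1 : ∑ j ∈ Finset.range (k + 1), (p : ℤ) ^ (m + 2 * j)
      = (p : ℤ) ^ m * ∑ j ∈ Finset.range (k + 1), (p : ℤ) ^ (2 * j) := by
    rw [Finset.mul_sum]; exact Finset.sum_congr rfl fun j _ => pow_add _ _ _
  have e2 : ∑ j ∈ Finset.range k, (p : ℤ) ^ (m + 1 + 2 * j)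
      = (p : ℤ) ^ (m + 1) * ∑ j ∈ Finset.range k, (p : ℤ) ^ (2 * j) := by
    rw [Finset.mul_sum]; exact Finset.sum_congr rfl fun j _ => pow_add _ _ _
  have e4 : ∑ j ∈ Finset.range (k + 1), (p : ℤ) ^ (2 * j)
      = 1 + (p : ℤ) ^ 2 * ∑ j ∈ Finset.range k, (p : ℤ) ^ (2 * j) := by
    rw [Finset.sum_range_succ' (fun j => (p : ℤ) ^ (2 * j)) k]
    rw [Finset.mul_sum]
    norm_num
    rw [add_comm]
    congr 1
    exact Finset.sum_congr rfl fun j _ => by ring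
  rw [e1, e2, e4, Finset.sum_range_succ] at hZ
  have hc : (p : ℤ) ^ m * ((A : ℤ) + (B * p * (∑ j ∈ Finset.range k, (p : ℤ) ^ (2 * j))
        + g * (p : ℤ) ^ (2 * k + 1)))
      = (p : ℤ) ^ m * ((B : ℤ) + p * (B * p * (∑ j ∈ Finset.range k, (p : ℤ) ^ (2 * j))
        + g * (p : ℤ) ^ (2 * k + 1))) := by linear_combination -hZ
  have hp0 : ((p : ℤ)) ^ m ≠ 0 := by positivity
  have := mul_left_cancel₀ hp0 hc
  exact_mod_cast this

private lemma Weq (p A B W1 W2 : ℕ) (hp : 2 ≤ p)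
    (e1 : A + W1 = B + p * W1) (e2 : A + W2 = B + p * W2) : W1 = W2 := by
  have h1 : (A : ℤ) + W1 = B + p * W1 := by exact_mod_cast e1
  have h2 : (A : ℤ) + W2 = B + p * W2 := by exact_mod_cast e2
  have h3 : ((p : ℤ) - 1) * (W1 - W2) = 0 := by linear_combination h2 - h1
  have hp1 : ((p : ℤ) - 1) ≠ 0 := by
    have : (2 : ℤ) ≤ p := by exact_mod_cast hp
    omega
  have := (mul_eq_zero.mp h3).resolve_left hp1
  have : (W1 : ℤ) = W2 := by omega
  exact_mod_cast this

private lemma tid (p : ℕ) (k : ℕ) :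
    ((p : ℤ) ^ 2 - 1) * ∑ j ∈ Finset.range k, (p : ℤ) ^ (2 * j)
      = (p : ℤ) ^ (2 * k) - 1 := by
  have h := geom_sum_mul ((p : ℤ) ^ 2) k
  have hs : ∑ j ∈ Finset.range k, ((p : ℤ) ^ 2) ^ j
      = ∑ j ∈ Finset.range k, (p : ℤ) ^ (2 * j) :=
    Finset.sum_congr rfl fun j _ => by rw [← pow_mul]
  rw [hs] at h
  rw [pow_mul]
  linarith [h]

set_option maxHeartbeats 1000000 in
/-- Lemma 6.6 (onlytwo): with `a + b = 2c`, `a ≠ b`, `A ≥ B ≥ p + 1`, the three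
equalities `v_g(f_g) = v_g(f_g − 1)` (for `g = a, b, c` and `1 ≤ f_g ≤ n`) cannot
hold simultaneously. -/
theorem at_most_two_coincidences
    (p : ℕ) (hp : p.Prime) (hp2 : p ≠ 2)
    (A B a b c : ℕ) (hA : 0 < A) (hB : 0 < B)
    (ha : 0 < a) (hb : 0 < b) (hc : 0 < c)
    (habc : a + b = 2 * c) (hab : a ≠ b)
    (hAB : B ≤ A) (hBp : p + 1 ≤ B)
    (n : ℕ) (hn : 1 ≤ n)
    (v : ℕ → ℕ → ℕ)
    (hv : ∀ g f, v g f = A * (∑ i ∈ Finset.range (n - f), p ^ i)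
        + B * (∑ j ∈ Finset.range f, p ^ (n - f + 2 * j))
        + g * p ^ (n + f)) :
    ¬ ∃ fa fb fc : ℕ,
        (1 ≤ fa ∧ fa ≤ n) ∧ (1 ≤ fb ∧ fb ≤ n) ∧ (1 ≤ fc ∧ fc ≤ n) ∧
        v a fa = v a (fa - 1) ∧ v b fb = v b (fb - 1) ∧ v c fc = v c (fc - 1) := by
  rintro ⟨fa, fb, fc, ⟨hfa1, hfa2⟩, ⟨hfb1, hfb2⟩, ⟨hfc1, hfc2⟩, hea, heb, hec⟩
  have hp2le : 2 ≤ p := hp.two_le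
  have hp3 : 3 ≤ p := by
    rcases hp2le.lt_or_eq with h | h
    · omega
    · exact absurd h.symm hp2
  obtain ⟨ka, hfa, Ea⟩ := key p A B n hp2le v hv a fa hfa1 hfa2 hea
  obtain ⟨kb, hfb, Eb⟩ := key p A B n hp2le v hv b fb hfb1 hfb2 heb
  obtain ⟨kc, hfc, Ec⟩ := key p A B n hp2le v hv c fc hfc1 hfc2 hec
  -- equal W's
  have hWab := Weq p A B _ _ hp2le Ea Eb
  have hWac := Weq p A B _ _ hp2le Ea Ec
  -- pass to ℤ
  have hp1 : (1 : ℤ) ≤ (p : ℤ) := by exact_mod_cast hp.one_le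
  have hWabZ : (B : ℤ) * p * (∑ j ∈ Finset.range ka, (p : ℤ) ^ (2 * j))
        + a * (p : ℤ) ^ (2 * ka + 1)
      = B * p * (∑ j ∈ Finset.range kb, (p : ℤ) ^ (2 * j))
        + b * (p : ℤ) ^ (2 * kb + 1) := by exact_mod_cast hWab
  have hWacZ : (B : ℤ) * p * (∑ j ∈ Finset.range ka, (p : ℤ) ^ (2 * j))
        + a * (p : ℤ) ^ (2 * ka + 1)
      = B * p * (∑ j ∈ Finset.range kc, (p : ℤ) ^ (2 * j))
        + c * (p : ℤ) ^ (2 * kc + 1) := by exact_mod_cast hWac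
  set TaZ := ∑ j ∈ Finset.range ka, (p : ℤ) ^ (2 * j) with hTa
  set TbZ := ∑ j ∈ Finset.range kb, (p : ℤ) ^ (2 * j) with hTb
  set TcZ := ∑ j ∈ Finset.range kc, (p : ℤ) ^ (2 * j) with hTc
  set K : ℤ := ((p : ℤ) ^ 2 - 1) * ((B : ℤ) * p * TaZ + a * (p : ℤ) ^ (2 * ka + 1)) + B * p
    with hK
  have hKa : (p : ℤ) ^ (2 * ka + 1) * ((B : ℤ) + a * ((p : ℤ) ^ 2 - 1)) = K := by
    rw [hK]
    linear_combination (-(B : ℤ) * p) * tid p ka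
  have hKb : (p : ℤ) ^ (2 * kb + 1) * ((B : ℤ) + b * ((p : ℤ) ^ 2 - 1)) = K := by
    rw [hK, hWabZ]
    linear_combination (-(B : ℤ) * p) * tid p kb
  have hKc : (p : ℤ) ^ (2 * kc + 1) * ((B : ℤ) + c * ((p : ℤ) ^ 2 - 1)) = K := by
    rw [hK, hWacZ]
    linear_combination (-(B : ℤ) * p) * tid p kc
  have hM : ((B : ℤ) + a * ((p : ℤ) ^ 2 - 1)) + ((B : ℤ) + b * ((p : ℤ) ^ 2 - 1))
      = 2 * ((B : ℤ) + c * ((p : ℤ) ^ 2 - 1)) := by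
    have : ((a : ℤ) + b) = 2 * c := by exact_mod_cast habc
    linear_combination ((p : ℤ) ^ 2 - 1) * this
  have hpsq : (1 : ℤ) ≤ (p : ℤ) ^ 2 := by exact_mod_cast Nat.one_le_pow 2 p (by omega)
  have hMa0 : ((B : ℤ) + a * ((p : ℤ) ^ 2 - 1)) ≠ 0 := by
    have h1 : (1 : ℤ) ≤ (B : ℤ) := by exact_mod_cast hB
    have h2 : (0 : ℤ) ≤ (a : ℤ) := by positivity
    have h3 : (0 : ℤ) ≤ (a : ℤ) * ((p : ℤ) ^ 2 - 1) := mul_nonneg h2 (by linarith)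
    intro hcon
    linarith
  have hpq : ((p : ℤ) ^ 2 - 1) ≠ 0 := by
    have h4 : (4 : ℤ) ≤ (p : ℤ) ^ 2 := by exact_mod_cast Nat.pow_le_pow_left hp2le 2
    intro hcon
    linarith
  -- e_a ≠ e_b
  have hkab : ka ≠ kb := by
    intro hk
    rw [hk] at hKa
    have := hKa.trans hKb.symm
    have h2 := mul_left_cancel₀ (pow_ne_zero (2 * kb + 1) (by positivity : ((p:ℤ)) ≠ 0)) this
    have h3 : (a : ℤ) * ((p : ℤ) ^ 2 - 1) = b * ((p : ℤ) ^ 2 - 1) := by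
      linear_combination h2
    have h4 : (a : ℤ) = b := mul_right_cancel₀ hpq h3
    exact hab (by exact_mod_cast h4)
  -- the power identity
  have h2p : 2 * (p : ℤ) ^ ((2 * ka + 1) + (2 * kb + 1))
      = (p : ℤ) ^ ((2 * kc + 1) + (2 * kb + 1)) + (p : ℤ) ^ ((2 * kc + 1) + (2 * ka + 1)) := by
    have hmul : (2 * (p : ℤ) ^ ((2 * ka + 1) + (2 * kb + 1))) * ((B : ℤ) + a * ((p : ℤ) ^ 2 - 1))
        = ((p : ℤ) ^ ((2 * kc + 1) + (2 * kb + 1)) + (p : ℤ) ^ ((2 * kc + 1) + (2 * ka + 1)))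
          * ((B : ℤ) + a * ((p : ℤ) ^ 2 - 1)) := by
      linear_combination (2 * (p : ℤ) ^ (2 * kb + 1) - (p : ℤ) ^ (2 * kc + 1)) * hKa
        + (p : ℤ) ^ (2 * kc + 1) * hKb - 2 * (p : ℤ) ^ (2 * kb + 1) * hKc
        - (p : ℤ) ^ ((2 * kc + 1) + (2 * kb + 1)) * hM
    exact mul_right_cancel₀ hMa0 hmul
  have h4 : 2 * p ^ ((2 * ka + 1) + (2 * kb + 1))
      = p ^ ((2 * kc + 1) + (2 * kb + 1)) + p ^ ((2 * kc + 1) + (2 * ka + 1)) := by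
    exact_mod_cast h2p
  exact no_pow_sum p hp3 _ _ _ (by omega) h4
end

section
/- Let p be an odd prime and let A, B, e, n be positive integers with 1 ≤ e ≤ n and B·(1 + p^{2e−1}) < A·(1 + p) < B·(1 + p^{2e+1}). For integers 0 ≤ f ≤ n define w(f) = A·∑_{i=0}^{n−f} p^i + B·∑_{j=0}^{f−1} p^{n−f+1+2j}. Then w(e) < w(f) for every f ∈ {0, 1, …, n} with f ≠ e. -/
/-- Lemma 6.4 (twonetopleft), arithmetic content: if
`B(1+p^{2e−1}) < A(1+p) < B(1+p^{2e+1})` with `1 ≤ e ≤ n`, then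
`w(f) = A(1+⋯+p^{n−f}) + B(p^{n−f+1}+p^{n−f+3}+⋯+p^{n+f−1})` has a strict
unique minimum on `{0,…,n}` at `f = e`. -/
theorem unique_minimum_strict_case
    (p : ℕ) (hp : p.Prime) (hp2 : p ≠ 2)
    (A B e n : ℕ) (hA : 0 < A) (hB : 0 < B) (he : 1 ≤ e) (hen : e ≤ n)
    (h1 : B * (1 + p ^ (2 * e - 1)) < A * (1 + p))
    (h2 : A * (1 + p) < B * (1 + p ^ (2 * e + 1)))
    (w : ℕ → ℕ)
    (hw : ∀ f, w f = A * (∑ i ∈ Finset.range (n - f + 1), p ^ i)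
        + B * (∑ j ∈ Finset.range f, p ^ (n - f + 1 + 2 * j))) :
    ∀ f, f ≤ n → f ≠ e → w e < w f := by
  have hp3 : 3 ≤ p := by
    have := hp.two_le
    omega
  set q : ℤ := (p : ℤ) with hq
  have hq3 : (3:ℤ) ≤ q := by rw [hq]; exact_mod_cast hp3
  have hq1 : (1:ℤ) < q := by linarith
  have hqpos : (0:ℤ) < q := by linarith
  have hfac : (0:ℤ) < q^2 - 1 := by nlinarith
  -- closed form for (q²-1)·w(f)
  have mulw : ∀ f, f ≤ n → (q^2 - 1) * (w f : ℤ)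
      = (A:ℤ)*(q+1)*(q^(n-f+1)-1) + (B:ℤ)*(q^(n-f+1)*(q^(2*f)-1)) := by
    intro f hf
    rw [hw f]
    push_cast
    have h1s : (∑ i ∈ Finset.range (n-f+1), q^i) * (q-1) = q^(n-f+1) - 1 :=
      geom_sum_mul q _
    have h2s : (∑ j ∈ Finset.range f, q^(n-f+1+2*j))
        = q^(n-f+1) * ∑ j ∈ Finset.range f, (q^2)^j := by
      rw [Finset.mul_sum]
      refine Finset.sum_congr rfl fun j _ => ?_
      rw [pow_add, pow_mul]
    have h3s : (∑ j ∈ Finset.range f, (q^2)^j) * (q^2 - 1) = q^(2*f) - 1 := by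
      rw [geom_sum_mul, ← pow_mul]
    rw [h2s]
    linear_combination (A:ℤ)*(q+1)*h1s + (B:ℤ)*q^(n-f+1)*h3s
  -- the step identity
  have step : ∀ f, f < n → (q^2-1) * ((w (f+1) : ℤ) - (w f : ℤ))
      = q^(n-f) * (q-1) * ((B:ℤ)*(q^(2*f+1)+1) - (A:ℤ)*(q+1)) := by
    intro f hf
    have e1 := mulw (f+1) (by omega)
    have e2 := mulw f (le_of_lt hf)
    have hnf : n - (f+1) + 1 = n - f := by omega
    rw [hnf] at e1
    have hnf2 : n - f + 1 = (n - f) + 1 := rfl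
    linear_combination e1 - e2
  have hA1 : (B:ℤ) * (1 + q^(2*e-1)) < (A:ℤ)*(1+q) := by rw [hq]; exact_mod_cast h1
  have hA2 : (A:ℤ)*(1+q) < (B:ℤ) * (1 + q^(2*e+1)) := by rw [hq]; exact_mod_cast h2
  have hBpos : (0:ℤ) < B := by exact_mod_cast hB
  -- decrease before e
  have dec : ∀ f, f < e → (w (f+1) : ℤ) < (w f : ℤ) := by
    intro f hf
    have hfn : f < n := lt_of_lt_of_le hf hen
    have hs := step f hfn
    have hmono : q^(2*f+1) ≤ q^(2*e-1) :=
      pow_le_pow_right₀ (by linarith) (by omega)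
    have hneg : (B:ℤ)*(q^(2*f+1)+1) - (A:ℤ)*(q+1) < 0 := by
      have := mul_le_mul_of_nonneg_left (add_le_add_right hmono 1) (le_of_lt hBpos)
      linarith
    have hpow : (0:ℤ) < q^(n-f) * (q-1) :=
      mul_pos (pow_pos hqpos _) (by linarith)
    have hlt : (q^2-1) * ((w (f+1) : ℤ) - (w f : ℤ)) < 0 := by
      rw [hs]; exact mul_neg_of_pos_of_neg hpow hneg
    nlinarith
  -- increase after e
  have inc : ∀ f, e ≤ f → f < n → (w f : ℤ) < (w (f+1) : ℤ) := by
    intro f hef hfn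
    have hs := step f hfn
    have hmono : q^(2*e+1) ≤ q^(2*f+1) :=
      pow_le_pow_right₀ (by linarith) (by omega)
    have hpos : (0:ℤ) < (B:ℤ)*(q^(2*f+1)+1) - (A:ℤ)*(q+1) := by
      have := mul_le_mul_of_nonneg_left (add_le_add_right hmono 1) (le_of_lt hBpos)
      linarith
    have hpow : (0:ℤ) < q^(n-f) * (q-1) :=
      mul_pos (pow_pos hqpos _) (by linarith)
    have hlt : 0 < (q^2-1) * ((w (f+1) : ℤ) - (w f : ℤ)) := by
      rw [hs]; exact mul_pos hpow hpos
    nlinarith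
  have down : ∀ f, ∀ g, f ≤ g → g ≤ e → (w g : ℤ) ≤ (w f : ℤ) := by
    intro f g hg
    induction g, hg using Nat.le_induction with
    | base => intro _; exact le_refl _
    | succ g hg ih =>
      intro hge
      have h1' := dec g (by omega)
      have h2' := ih (by omega)
      linarith
  have up : ∀ f, e ≤ f → ∀ g, f ≤ g → g ≤ n → (w f : ℤ) ≤ (w g : ℤ) := by
    intro f hef g hg
    induction g, hg using Nat.le_induction with
    | base => intro _; exact le_refl _
    | succ g hg ih =>
      intro hgn
      have h1' := inc g (by omega) (by omega)
      have h2' := ih (by omega)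
      linarith
  intro f hfn hne
  rcases lt_or_gt_of_ne hne with hlt | hgt
  · have h1' := dec f hlt
    have h2' : (w e : ℤ) ≤ (w (f+1) : ℤ) := down (f+1) e (by omega) le_rfl
    exact_mod_cast (show (w e : ℤ) < (w f : ℤ) by linarith)
  · have h1' := inc e le_rfl (by omega)
    have h2' : (w (e+1) : ℤ) ≤ (w f : ℤ) := up (e+1) (by omega) f (by omega) hfn
    exact_mod_cast (show (w e : ℤ) < (w f : ℤ) by linarith)
end

section
/- Let p be an odd prime and let A, B, e, n be positive integers with 1 ≤ e ≤ n and A·(1 + p) = B·(1 + p^{2e−1}). For integers 0 ≤ f ≤ n define w(f) = A·∑_{i=0}^{n−f} p^i + B·∑_{j=0}^{f−1} p^{n−f+1+2j}. Then w(e − 1) = w(e), and w(e) < w(f) for every f ∈ {0, 1, …, n} with f ∉ {e − 1, e}; that is, the minimum of w is attained exactly at the two consecutive values f = e − 1 and f = e. -/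
lemma Bsum (p m : ℕ) : ∀ g : ℕ,
    (1+p) * ∑ j ∈ Finset.range (g+1), p^(m+1+2*j)
      = (1+p) * ∑ j ∈ Finset.range g, p^(m+2+2*j) + p^(m+1) + p^(m+2+2*g) := by
  intro g
  induction g with
  | zero => simp [Finset.sum_range_succ]; ring
  | succ g ih =>
    rw [Finset.sum_range_succ (f := fun j => p^(m+1+2*j)),
        Finset.sum_range_succ (f := fun j => p^(m+2+2*j))]
    zify at ih ⊢
    linear_combination ih

/-- Lemma 6.10 (casethreetwo), arithmetic content: if `A(1+p) = B(1+p^{2e−1})`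
with `1 ≤ e ≤ n`, then `w(f) = A(1+⋯+p^{n−f}) + B(p^{n−f+1}+⋯+p^{n+f−1})`
attains its minimum on `{0,…,n}` exactly at the two consecutive values
`f = e−1` and `f = e`. -/
theorem double_minimum_equality_case
    (p : ℕ) (hp : p.Prime) (hp2 : p ≠ 2)
    (A B e n : ℕ) (hA : 0 < A) (hB : 0 < B) (he : 1 ≤ e) (hen : e ≤ n)
    (h1 : A * (1 + p) = B * (1 + p ^ (2 * e - 1)))
    (w : ℕ → ℕ)
    (hw : ∀ f, w f = A * (∑ i ∈ Finset.range (n - f + 1), p ^ i)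
        + B * (∑ j ∈ Finset.range f, p ^ (n - f + 1 + 2 * j))) :
    w (e - 1) = w e ∧ ∀ f, f ≤ n → f ≠ e - 1 → f ≠ e → w e < w f := by
  have hp1 : 1 < p := hp.one_lt
  -- key identity relating consecutive values of w
  have key : ∀ g, g + 1 ≤ n →
      (1+p) * w (g+1) + p^(n-(g+1)+1) * (A*(1+p))
        = (1+p) * w g + p^(n-(g+1)+1) * (B*(1+p^(2*g+1))) := by
    intro g hg
    set m := n - (g+1) with hm
    have hm1 : n - g = m + 1 := by omega
    rw [hw (g+1), hw g, hm1]
    rw [show n - (g+1) + 1 = m + 1 from by omega]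
    have hb := Bsum p m g
    rw [Finset.sum_range_succ (fun i => p ^ i) (m+1)]
    zify at hb ⊢
    linear_combination (B : ℤ) * hb
  -- strict decrease before e
  have mono_lt : ∀ g, g + 1 ≤ n → g + 1 < e → w (g+1) < w g := by
    intro g hgn hge
    have hk := key g hgn
    have hPpos : 0 < p^(n-(g+1)+1) := Nat.pow_pos (by omega)
    have hexp : p^(2*g+1) < p^(2*e-1) := Nat.pow_lt_pow_right hp1 (by omega)
    have hlt : B*(1+p^(2*g+1)) < A*(1+p) := by
      rw [h1]; exact Nat.mul_lt_mul_of_le_of_lt (le_refl B) (by omega) hB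
    have h2 : (1+p) * w (g+1) + p^(n-(g+1)+1) * (A*(1+p))
        < (1+p) * w g + p^(n-(g+1)+1) * (A*(1+p)) := by
      rw [hk]
      exact Nat.add_lt_add_left (Nat.mul_lt_mul_of_le_of_lt (le_refl _) hlt hPpos) _
    have h3 : (1+p) * w (g+1) < (1+p) * w g := lt_of_add_lt_add_right h2
    exact Nat.lt_of_mul_lt_mul_left h3
  -- strict increase after e
  have mono_gt : ∀ g, g + 1 ≤ n → e ≤ g → w g < w (g+1) := by
    intro g hgn hge
    have hk := key g hgn
    have hPpos : 0 < p^(n-(g+1)+1) := Nat.pow_pos (by omega)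
    have hexp : p^(2*e-1) < p^(2*g+1) := Nat.pow_lt_pow_right hp1 (by omega)
    have hlt : A*(1+p) < B*(1+p^(2*g+1)) := by
      rw [h1]; exact Nat.mul_lt_mul_of_le_of_lt (le_refl B) (by omega) hB
    have h2 : (1+p) * w (g+1) + p^(n-(g+1)+1) * (A*(1+p))
        < (1+p) * w (g+1) + p^(n-(g+1)+1) * (B*(1+p^(2*g+1))) :=
      Nat.add_lt_add_left (Nat.mul_lt_mul_of_le_of_lt (le_refl _) hlt hPpos) _
    rw [hk] at h2
    have h3 : (1+p) * w g < (1+p) * w (g+1) := lt_of_add_lt_add_right h2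
    exact Nat.lt_of_mul_lt_mul_left h3
  -- equality at e
  have heq : w (e-1) = w e := by
    have hk := key (e-1) (by omega)
    rw [show e - 1 + 1 = e from by omega, show 2*(e-1)+1 = 2*e-1 from by omega, h1] at hk
    have := Nat.add_right_cancel hk
    exact (Nat.eq_of_mul_eq_mul_left (by omega) this).symm
  refine ⟨heq, ?_⟩
  -- downward chain: w (e-1) < w k for k < e-1
  have down : ∀ j, j ≤ e - 1 → w (e-1) ≤ w (e-1-j) ∧ (0 < j → w (e-1) < w (e-1-j)) := by
    intro j
    induction j with
    | zero => intro _; exact ⟨le_refl _, by omega⟩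
    | succ j ih =>
      intro hj
      have h1' := (ih (by omega)).1
      have hstep : w (e-1-j) < w (e-1-(j+1)) := by
        have := mono_lt (e-1-(j+1)) (by omega) (by omega)
        rwa [show e-1-(j+1)+1 = e-1-j from by omega] at this
      exact ⟨le_of_lt (lt_of_le_of_lt h1' hstep), fun _ => lt_of_le_of_lt h1' hstep⟩
  -- upward chain: w e < w (e+j) for 0 < j
  have up : ∀ j, e + j ≤ n → w e ≤ w (e+j) ∧ (0 < j → w e < w (e+j)) := by
    intro j
    induction j with
    | zero => intro _; exact ⟨le_refl _, by omega⟩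
    | succ j ih =>
      intro hj
      have h1' := (ih (by omega)).1
      have hstep : w (e+j) < w (e+(j+1)) := by
        have := mono_gt (e+j) (by omega) (by omega)
        rwa [show e+j+1 = e+(j+1) from by omega] at this
      exact ⟨le_of_lt (lt_of_le_of_lt h1' hstep), fun _ => lt_of_le_of_lt h1' hstep⟩
  intro f hfn hfe1 hfe
  rcases lt_or_gt_of_ne hfe with hlt | hgt
  · -- f < e, f ≠ e-1 so f < e-1
    have hfe1' : f < e - 1 := by omega
    have := (down (e-1-f) (by omega)).2 (by omega)
    rw [show e-1-(e-1-f) = f from by omega] at this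
    omega
  · -- f > e
    have := (up (f-e) (by omega)).2 (by omega)
    rw [show e+(f-e) = f from by omega] at this
    omega
end

section
/- Let p be an odd prime, k a field of characteristic p, λ ∈ k with λ^p = −λ and λ ≠ 0, and c ∈ k with c ≠ 0. Let 𝐁 be the 5×5 matrix over k whose rows are (−1/2, λ/2, 0, c/2, 0), (−1/(2λ), 1/2, 0, c/(2λ), 0), (c, −cλ, 0, −c², 0), (0,0,0,0,0), (0,0,0,0,0). For n ≥ 1 set 𝐁ₙ = 𝐁·𝐁^{(1)}⋯𝐁^{(n)}, where 𝐁^{(i)} is obtained by raising every entry to the p^i-th power, and let S^{(n−1)} be the row vector (1, λ^{p^{n−1}}, 0, −c^{pⁿ}, 0). Then the fourth and fifth rows of 𝐁ₙ are zero, each of the first three rows of 𝐁ₙ is a NONZERO k-scalar multiple of S^{(n−1)}, and in particular 𝐁ₙ has rank exactly 1. -/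
set_option maxHeartbeats 1000000 in
/-- Lemma A.2(2) (lingen), mod-p form: for the supergeneric matrix `𝐁` and its
twisted products `𝐁ₙ = 𝐁·𝐁^{(1)}⋯𝐁^{(n)}`, the fourth and fifth rows of `𝐁ₙ`
vanish, each of the first three rows is a nonzero scalar multiple of
`S^{(n−1)} = (1, λ^{p^{n−1}}, 0, −c^{pⁿ}, 0)`, and `𝐁ₙ` has rank exactly 1. -/
theorem supergeneric_rank_one
    (p : ℕ) (hp : p.Prime) (hp2 : p ≠ 2)
    (k : Type*) [Field k] [CharP k p]
    (lam : k) (hlam : lam ^ p = -lam) (hlam0 : lam ≠ 0)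
    (c : k) (hc : c ≠ 0)
    (B : Matrix (Fin 5) (Fin 5) k)
    (hB : B = !![-1/2, lam/2, 0, c/2, 0;
                 -1/(2*lam), 1/2, 0, c/(2*lam), 0;
                 c, -(c*lam), 0, -(c^2), 0;
                 0, 0, 0, 0, 0;
                 0, 0, 0, 0, 0])
    (Bn : ℕ → Matrix (Fin 5) (Fin 5) k)
    (hBn : ∀ n, Bn n =
      ((List.range (n + 1)).map (fun i => B.map (fun x => x ^ p ^ i))).prod) :
    ∀ n, 1 ≤ n →
      (Bn n) 3 = 0 ∧ (Bn n) 4 = 0 ∧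
      (∀ i : Fin 5, (i : ℕ) < 3 → ∃ d : k, d ≠ 0 ∧
        (Bn n) i = d • ![1, lam ^ p ^ (n - 1), 0, -(c ^ p ^ n), 0]) ∧
      (Bn n).rank = 1 := by
  have h2 : (2:k) ≠ 0 := by
    intro h
    exact hp2 ((Nat.prime_dvd_prime_iff_eq hp Nat.prime_two).mp
      ((CharP.cast_eq_zero_iff k p 2).mp (by exact_mod_cast h)))
  have hpow2 : ∀ n : ℕ, ((2:k)^n) ≠ 0 := fun n => pow_ne_zero n h2
  have h4 : (4:k) ≠ 0 := by
    have h42 : (4:k) = 2^2 := by norm_num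
    rw [h42]; exact hpow2 2
  have hoddp : Odd p := hp.odd_of_ne_two hp2
  have hodd : ∀ j : ℕ, Odd (p ^ j) := fun j => hoddp.pow
  have hlampow : ∀ j : ℕ, lam ^ p ^ (j+1) = -(lam ^ p ^ j) := by
    intro j
    rw [pow_succ', pow_mul, hlam]
    exact (hodd j).neg_pow lam
  -- rows of B
  have hB0 : B 0 = ![-1/2, lam/2, 0, c/2, 0] := by
    subst hB; funext j; fin_cases j <;> rfl
  have hB1 : B 1 = ![-1/(2*lam), 1/2, 0, c/(2*lam), 0] := by
    subst hB; funext j; fin_cases j <;> rfl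
  have hB2 : B 2 = ![c, -(c*lam), 0, -(c^2), 0] := by
    subst hB; funext j; fin_cases j <;> rfl
  have hB3 : B 3 = 0 := by
    subst hB; funext j; fin_cases j <;> rfl
  have hB4 : B 4 = 0 := by
    subst hB; funext j; fin_cases j <;> rfl
  -- key step computation
  have key : ∀ m : ℕ,
      Matrix.vecMul ![1, lam ^ p ^ m, 0, -(c ^ p ^ (m+1)), 0]
        (B.map (fun x => x ^ p ^ (m+2)))
      = (-(2 * (2:k)⁻¹ ^ p ^ (m+2))) • ![1, lam ^ p ^ (m+1), 0, -(c ^ p ^ (m+2)), 0] := by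
    intro m
    have hq : lam ^ p ^ (m+2) = lam ^ p ^ m := by rw [hlampow, hlampow, neg_neg]
    have hmu : lam ^ p ^ m ≠ 0 := pow_ne_zero _ hlam0
    have h2q : (2:k) ^ p ^ (m+2) ≠ 0 := pow_ne_zero _ h2
    rw [hB]
    funext s
    fin_cases s <;>
      simp [Matrix.vecMul, dotProduct, Fin.sum_univ_five, Matrix.map_apply,
        div_pow, mul_pow, (hodd (m+2)).neg_pow, zero_pow, hp.ne_zero, hq, hlampow] <;>
      field_simp <;>
      ring
  -- base case rows
  have hpow1 : ∀ x : k, x ^ p ^ 1 = x ^ p := fun x => by rw [pow_one]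
  have row0 : Matrix.vecMul ![-1/2, lam/2, 0, c/2, 0] (B.map (fun x => x ^ p ^ 1))
      = ((2:k)⁻¹ ^ p) • ![1, lam ^ p ^ 0, 0, -(c ^ p ^ 1), 0] := by
    rw [hB]
    funext s
    fin_cases s
    all_goals simp [Matrix.vecMul, dotProduct, Fin.sum_univ_five, Matrix.map_apply,
        div_pow, mul_pow, hoddp.neg_pow, hoddp.neg_one_pow, zero_pow, hp.ne_zero,
      pow_one, hlam]
    all_goals try field_simp
    all_goals try simp only [inv_pow]
    all_goals try field_simp
    all_goals try ring
    all_goals try simp only [inv_pow]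
    all_goals try field_simp
    all_goals try ring
  have row1 : Matrix.vecMul ![-1/(2*lam), 1/2, 0, c/(2*lam), 0] (B.map (fun x => x ^ p ^ 1))
      = ((2:k)⁻¹ ^ p / lam) • ![1, lam ^ p ^ 0, 0, -(c ^ p ^ 1), 0] := by
    rw [hB]
    funext s
    fin_cases s
    all_goals simp [Matrix.vecMul, dotProduct, Fin.sum_univ_five, Matrix.map_apply,
        div_pow, mul_pow, hoddp.neg_pow, hoddp.neg_one_pow, zero_pow, hp.ne_zero,
      pow_one, hlam]
    all_goals try field_simp
    all_goals try simp only [inv_pow]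
    all_goals try field_simp
    all_goals try ring
    all_goals try simp only [inv_pow]
    all_goals try field_simp
    all_goals try ring
  have row2 : Matrix.vecMul ![c, -(c*lam), 0, -(c^2), 0] (B.map (fun x => x ^ p ^ 1))
      = (-(2 * c * (2:k)⁻¹ ^ p)) • ![1, lam ^ p ^ 0, 0, -(c ^ p ^ 1), 0] := by
    rw [hB]
    funext s
    fin_cases s
    all_goals simp [Matrix.vecMul, dotProduct, Fin.sum_univ_five, Matrix.map_apply,
        div_pow, mul_pow, hoddp.neg_pow, hoddp.neg_one_pow, zero_pow, hp.ne_zero,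
      pow_one, hlam]
    all_goals try field_simp
    all_goals try simp only [inv_pow]
    all_goals try field_simp
    all_goals try ring
    all_goals try simp only [inv_pow]
    all_goals try field_simp
    all_goals try ring
  -- the recurrence
  have hrec : ∀ n : ℕ, Bn (n+1) = Bn n * (B.map (fun x => x ^ p ^ (n+1))) := by
    intro n
    rw [hBn, hBn, List.range_succ, List.map_append, List.prod_append]
    simp
  have hBn0 : Bn 0 = B := by
    have h1 : List.range 1 = [0] := rfl
    rw [hBn, h1]
    simp only [List.map_cons, List.map_nil, List.prod_cons, List.prod_nil, mul_one, pow_zero,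
      pow_one]
    ext i j
    simp [Matrix.map_apply]
  -- main induction
  have main : ∀ m : ℕ, ∃ d : Fin 5 → k, d 0 ≠ 0 ∧ d 1 ≠ 0 ∧ d 2 ≠ 0 ∧ d 3 = 0 ∧ d 4 = 0 ∧
      ∀ i : Fin 5, Bn (m+1) i = d i • ![1, lam ^ p ^ m, 0, -(c ^ p ^ (m+1)), 0] := by
    intro m
    induction m with
    | zero =>
      have ht : (2:k)⁻¹ ^ p ≠ 0 := pow_ne_zero _ (inv_ne_zero h2)
      refine ⟨![(2:k)⁻¹^p, (2:k)⁻¹^p/lam, -(2*c*(2:k)⁻¹^p), 0, 0],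
        ht, div_ne_zero ht hlam0,
        by simpa using mul_ne_zero (mul_ne_zero h2 hc) ht, rfl, rfl, ?_⟩
      intro i
      rw [hrec 0, hBn0, Matrix.mul_apply_eq_vecMul]
      fin_cases i
      · show Matrix.vecMul (B 0) (B.map (fun x => x ^ p ^ 1))
            = ((2:k)⁻¹ ^ p) • ![1, lam ^ p ^ 0, 0, -(c ^ p ^ 1), 0]
        rw [hB0]; exact row0
      · show Matrix.vecMul (B 1) (B.map (fun x => x ^ p ^ 1))
            = ((2:k)⁻¹ ^ p / lam) • ![1, lam ^ p ^ 0, 0, -(c ^ p ^ 1), 0]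
        rw [hB1]; exact row1
      · show Matrix.vecMul (B 2) (B.map (fun x => x ^ p ^ 1))
            = (-(2 * c * (2:k)⁻¹ ^ p)) • ![1, lam ^ p ^ 0, 0, -(c ^ p ^ 1), 0]
        rw [hB2]; exact row2
      · show Matrix.vecMul (B 3) (B.map (fun x => x ^ p ^ 1))
            = (0:k) • ![1, lam ^ p ^ 0, 0, -(c ^ p ^ 1), 0]
        rw [hB3, Matrix.zero_vecMul, zero_smul]
      · show Matrix.vecMul (B 4) (B.map (fun x => x ^ p ^ 1))
            = (0:k) • ![1, lam ^ p ^ 0, 0, -(c ^ p ^ 1), 0]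
        rw [hB4, Matrix.zero_vecMul, zero_smul]
    | succ n ih =>
      obtain ⟨d, h0, h1, h2', h3, h4, hmat⟩ := ih
      set e : k := -(2 * (2:k)⁻¹ ^ p ^ (n+2)) with he_def
      have he : e ≠ 0 := by
        simpa [he_def] using mul_ne_zero h2 (pow_ne_zero _ (inv_ne_zero h2))
      refine ⟨fun i => e * d i, mul_ne_zero he h0, mul_ne_zero he h1,
        mul_ne_zero he h2', by simp [h3], by simp [h4], ?_⟩
      intro i
      rw [hrec (n+1), Matrix.mul_apply_eq_vecMul, hmat i, Matrix.smul_vecMul, key n,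
        smul_smul, mul_comm (d i) e]
  -- conclusion
  intro n hn
  obtain ⟨m, rfl⟩ : ∃ m, n = m + 1 := ⟨n - 1, (Nat.succ_pred_eq_of_pos hn).symm⟩
  obtain ⟨d, h0, h1, h2', h3, h4, hrow⟩ := main m
  have hS0 : (![1, lam ^ p ^ m, 0, -(c ^ p ^ (m+1)), 0] : Fin 5 → k) ≠ 0 := by
    intro h
    have := congrFun h 0
    simp at this
  have hmm : m + 1 - 1 = m := rfl
  refine ⟨by simp [hrow 3, h3], by simp [hrow 4, h4], ?_, ?_⟩
  · intro i hi
    fin_cases i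
    · exact ⟨d 0, h0, by simpa [hmm] using hrow 0⟩
    · exact ⟨d 1, h1, by simpa [hmm] using hrow 1⟩
    · exact ⟨d 2, h2', by simpa [hmm] using hrow 2⟩
    · simp at hi
    · simp at hi
  · rw [Matrix.rank_eq_finrank_span_row]
    have hspan : Submodule.span k (Set.range (Bn (m+1))) =
        Submodule.span k {![1, lam ^ p ^ m, 0, -(c ^ p ^ (m+1)), 0]} := by
      apply le_antisymm
      · rw [Submodule.span_le]
        rintro _ ⟨i, rfl⟩
        rw [hrow i]
        exact Submodule.smul_mem _ _ (Submodule.subset_span rfl)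
      · rw [Submodule.span_le, Set.singleton_subset_iff]
        have hv : (![1, lam ^ p ^ m, 0, -(c ^ p ^ (m+1)), 0] : Fin 5 → k)
            = (d 0)⁻¹ • Bn (m+1) 0 := by
          rw [hrow 0, smul_smul, inv_mul_cancel₀ h0, one_smul]
        rw [hv]
        exact Submodule.smul_mem _ _ (Submodule.subset_span ⟨0, rfl⟩)
    erw [hspan]
    exact finrank_span_singleton hS0
end

section
/- Let p be an odd prime and k a field of characteristic p. Let ε, β, γ ∈ k with ε ≠ 0, ε^p = ε, γ^p = γ, γ ≠ 0, and β + γ²/(4ε) = 0. Let a ≥ 1 be an integer and let x = t^a, y = β·t^a + ∑_{i>a} βᵢtⁱ, and z = γ·t^a + ∑_{i>a} γᵢtⁱ be elements of the power series ring k[[t]], and suppose the tails are not both identically zero; let a' > a denote the smallest integer with βₐ' ≠ 0 or γₐ' ≠ 0. Let A be the t-adic order of x·y + z²/(4ε) and B the t-adic order of x·y^p + x^p·y + z^{1+p}/(2ε) (orders taken in ℕ ∪ {∞}). If A ≥ B, then both βₐ' ≠ 0 and γₐ' ≠ 0, and moreover B ≥ (p − 1)·a + 2·a'. -/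
open PowerSeries

section Aux

variable {k : Type*} [Field k]

private lemma ac_ord_mul {f g : PowerSeries k} {c d : ℕ}
    (hf : (c : ℕ∞) ≤ f.order) (hg : (d : ℕ∞) ≤ g.order) :
    ((c + d : ℕ) : ℕ∞) ≤ (f * g).order := by
  calc ((c + d : ℕ) : ℕ∞) = (c : ℕ∞) + (d : ℕ∞) := by push_cast; rfl
    _ ≤ f.order + g.order := add_le_add hf hg
    _ ≤ (f * g).order := PowerSeries.le_order_mul f g

private lemma ac_ord_pow {u : PowerSeries k} {c : ℕ}
    (h : (c : ℕ∞) ≤ u.order) (n : ℕ) : ((n * c : ℕ) : ℕ∞) ≤ (u ^ n).order := by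
  induction n with
  | zero => simp
  | succ n ih =>
      have h2 : ((n * c + c : ℕ) : ℕ∞) ≤ (u ^ n * u).order := ac_ord_mul ih h
      rw [← pow_succ] at h2
      convert h2 using 2
      ring

private lemma ac_ord_add3 {f g h : PowerSeries k} {n : ℕ}
    (h1 : (n : ℕ∞) ≤ f.order) (h2 : (n : ℕ∞) ≤ g.order) (h3 : (n : ℕ∞) ≤ h.order) :
    (n : ℕ∞) ≤ (f + g + h).order :=
  le_trans (le_min (le_trans (le_min h1 h2) (PowerSeries.min_order_le_order_add f g)) h3)
    (PowerSeries.min_order_le_order_add (f + g) h)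

private lemma ac_ord_C_mul {f : PowerSeries k} {c : ℕ} (e : k)
    (hf : (c : ℕ∞) ≤ f.order) : (c : ℕ∞) ≤ (PowerSeries.C e * f).order := by
  have h := ac_ord_mul (f := PowerSeries.C e) (g := f) (c := 0) (zero_le (a := (PowerSeries.C e).order)) hf
  simpa using h

private lemma ac_ord_weaken {f : PowerSeries k} {c d : ℕ} (h : d ≤ c)
    (hf : (c : ℕ∞) ≤ f.order) : (d : ℕ∞) ≤ f.order :=
  le_trans (by exact_mod_cast h) hf

end Aux

/-- Lemma 6.8 (aftercancel): with `x = t^a`, `y = βt^a + ⋯`, `z = γt^a + ⋯`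
(leading coefficients in `𝔽_p`, `β + γ²/(4ε) = 0`), `a'` the first exponent past
`a` where `y` or `z` has a nonzero coefficient, `A = ord(xy + z²/(4ε))` and
`B = ord(xy^p + x^p y + z^{1+p}/(2ε))`: if `A ≥ B` then both coefficients at `a'`
are nonzero and `B ≥ (p−1)a + 2a'`. -/
theorem aftercancel
    (p : ℕ) (hp : p.Prime) (hp2 : p ≠ 2)
    (k : Type*) [Field k] [CharP k p]
    (ε β γ : k) (hε0 : ε ≠ 0) (hεp : ε ^ p = ε) (hγp : γ ^ p = γ) (hγ0 : γ ≠ 0)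
    (hβγ : β + γ ^ 2 / (4 * ε) = 0)
    (a a' : ℕ) (ha : 1 ≤ a) (haa' : a < a')
    (y z : PowerSeries k)
    (hylow : ∀ i < a, PowerSeries.coeff i y = 0)
    (hya : PowerSeries.coeff a y = β)
    (hzlow : ∀ i < a, PowerSeries.coeff i z = 0)
    (hza : PowerSeries.coeff a z = γ)
    (hmid : ∀ i, a < i → i < a' →
      PowerSeries.coeff i y = 0 ∧ PowerSeries.coeff i z = 0)
    (ha' : PowerSeries.coeff a' y ≠ 0 ∨ PowerSeries.coeff a' z ≠ 0)
    (hAB : (PowerSeries.X ^ a * y ^ p + (PowerSeries.X : PowerSeries k) ^ (a * p) * y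
            + PowerSeries.C ((2 * ε)⁻¹) * z ^ (1 + p)).order
          ≤ (PowerSeries.X ^ a * y + PowerSeries.C ((4 * ε)⁻¹) * z ^ 2).order) :
    PowerSeries.coeff a' y ≠ 0 ∧ PowerSeries.coeff a' z ≠ 0 ∧
    (((p - 1) * a + 2 * a' : ℕ) : ℕ∞) ≤
      (PowerSeries.X ^ a * y ^ p + (PowerSeries.X : PowerSeries k) ^ (a * p) * y
        + PowerSeries.C ((2 * ε)⁻¹) * z ^ (1 + p)).order := by
  have hFact : Fact p.Prime := ⟨hp⟩
  have hp3 : 3 ≤ p := by have := hp.two_le; omega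
  -- basic scalar nonvanishing
  have h2 : (2 : k) ≠ 0 := by
    intro h0
    have := (CharP.cast_eq_zero_iff k p 2).mp (by exact_mod_cast h0)
    have := (Nat.prime_dvd_prime_iff_eq hp Nat.prime_two).mp this
    exact hp2 this
  have h4 : (4 : k) ≠ 0 := by
    intro h0
    have : (2 : k) * 2 = 0 := by rw [show (2:k)*2 = 4 by norm_num, h0]
    rcases mul_eq_zero.mp this with h | h <;> exact h2 h
  have h2ε : (2 : k) * ε ≠ 0 := mul_ne_zero h2 hε0
  have h4ε : (4 : k) * ε ≠ 0 := mul_ne_zero h4 hε0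
  set e2 : k := (2 * ε)⁻¹ with he2def
  set e4 : k := (4 * ε)⁻¹ with he4def
  set δ : k := γ * e2 with hδdef
  have hδ0 : δ ≠ 0 := mul_ne_zero hγ0 (inv_ne_zero h2ε)
  -- scalar identities
  have hs1 : β + γ ^ 2 * e4 = 0 := by rw [he4def, ← div_eq_mul_inv]; exact hβγ
  have hinv : e2 = 2 * e4 := by
    rw [he2def, he4def]
    field_simp
    ring
  have hs2 : 2 * (γ * e4) = δ := by rw [hδdef, hinv]; ring
  have hs3 : 2 * β + γ ^ 2 * e2 = 0 := by rw [hinv]; linear_combination 2 * hs1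
  -- Frobenius facts
  have hfr2 : (2 : k) ^ p = 2 := by
    rw [← frobenius_def]; exact map_ofNat (frobenius k p) 2
  have hfr4 : (4 : k) ^ p = 4 := by
    rw [← frobenius_def]; exact map_ofNat (frobenius k p) 4
  have hδp : δ ^ p = δ := by
    rw [hδdef, he2def, mul_pow, hγp, inv_pow, mul_pow, hεp, hfr2]
  have hoddp : Odd p := hp.odd_of_ne_two hp2
  have hβeq : β = -(γ ^ 2 * e4) := by linear_combination hs1
  have hβp : β ^ p = β := by
    rw [hβeq, hoddp.neg_pow, mul_pow, he4def, inv_pow, mul_pow, hεp, hfr4,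
      show (γ ^ 2) ^ p = (γ ^ p) ^ 2 by rw [← pow_mul, ← pow_mul, mul_comm], hγp]
  -- series setup
  set G := PowerSeries.X ^ a * y ^ p + (PowerSeries.X : PowerSeries k) ^ (a * p) * y
      + PowerSeries.C e2 * z ^ (1 + p) with hGdef
  set F := PowerSeries.X ^ a * y + PowerSeries.C e4 * z ^ 2 with hFdef
  set y1 : PowerSeries k := y - C β * X ^ a with hy1def
  set z1 : PowerSeries k := z - C γ * X ^ a with hz1def
  set w : PowerSeries k := y1 + C δ * z1 with hwdef
  have hyy : y = C β * X ^ a + y1 := by rw [hy1def]; ring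
  have hzz : z = C γ * X ^ a + z1 := by rw [hz1def]; ring
  have hy1c : ∀ i, coeff i y1 = coeff i y - (if i = a then β else 0) := by
    intro i; rw [hy1def, map_sub, coeff_C_mul_X_pow]
  have hz1c : ∀ i, coeff i z1 = coeff i z - (if i = a then γ else 0) := by
    intro i; rw [hz1def, map_sub, coeff_C_mul_X_pow]
  have hy1low : ∀ i < a', coeff i y1 = 0 := by
    intro i hi
    rw [hy1c]
    rcases lt_trichotomy i a with h | h | h
    · rw [hylow i h, if_neg h.ne]; ring
    · subst h; rw [hya, if_pos rfl]; ring
    · rw [(hmid i h hi).1, if_neg h.ne']; ring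
  have hz1low : ∀ i < a', coeff i z1 = 0 := by
    intro i hi
    rw [hz1c]
    rcases lt_trichotomy i a with h | h | h
    · rw [hzlow i h, if_neg h.ne]; ring
    · subst h; rw [hza, if_pos rfl]; ring
    · rw [(hmid i h hi).2, if_neg h.ne']; ring
  have hwlow : ∀ i < a', coeff i w = 0 := by
    intro i hi
    rw [hwdef, map_add, coeff_C_mul, hy1low i hi, hz1low i hi]; ring
  have hwa'c : coeff a' w = coeff a' y + δ * coeff a' z := by
    rw [hwdef, map_add, coeff_C_mul, hy1c, hz1c]
    simp only [if_neg (show ¬ a' = a by omega)]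
    ring
  have hordy1 : ((a' : ℕ) : ℕ∞) ≤ y1.order := PowerSeries.nat_le_order _ _ hy1low
  have hordz1 : ((a' : ℕ) : ℕ∞) ≤ z1.order := PowerSeries.nat_le_order _ _ hz1low
  have hordw : ((a' : ℕ) : ℕ∞) ≤ w.order := PowerSeries.nat_le_order _ _ hwlow
  -- C-level scalar identities
  have e1C : C β + C γ ^ 2 * C e4 = 0 := by
    rw [← map_pow, ← map_mul, ← map_add, hs1, map_zero]
  have e2C : 2 * (C γ * C e4) = C δ := by
    rw [← map_ofNat (C (R := k)) 2, ← map_mul, ← map_mul, hs2]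
  have e3C : 2 * C β + C γ ^ 2 * C e2 = 0 := by
    rw [← map_ofNat (C (R := k)) 2, ← map_mul, ← map_pow, ← map_mul, ← map_add, hs3, map_zero]
  have e4C : C γ * C e2 = C δ := by rw [← map_mul, ← hδdef]
  -- the F-identity
  have hFid : F = X ^ a * w + C e4 * z1 ^ 2 := by
    rw [hFdef, hwdef, hyy, hzz]
    linear_combination ((X : PowerSeries k) ^ a * (X : PowerSeries k) ^ a) * e1C
      + ((X : PowerSeries k) ^ a * z1) * e2C
  -- characteristic p facts for power series
  haveI : CharP (PowerSeries k) p := charP_of_injective_ringHom (C_injective (R := k)) p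
  have hyp : y ^ p = C β * (X : PowerSeries k) ^ (a * p) + y1 ^ p := by
    rw [hyy, add_pow_char, mul_pow, ← map_pow, hβp, ← pow_mul]
  have hzp : z ^ p = C γ * (X : PowerSeries k) ^ (a * p) + z1 ^ p := by
    rw [hzz, add_pow_char, mul_pow, ← map_pow, hγp, ← pow_mul]
  have hwp : w ^ p = y1 ^ p + C δ * z1 ^ p := by
    rw [hwdef, add_pow_char, mul_pow, ← map_pow, hδp]
  -- the G-identity
  have hGid : G = X ^ a * w ^ p + (X : PowerSeries k) ^ (a * p) * w
      + C e2 * (z1 * z1 ^ p) := by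
    rw [hGdef, hwp, hwdef, show z ^ (1 + p) = z ^ 1 * z ^ p from pow_add z 1 p, pow_one,
      hyp, hzp, hyy, hzz]
    linear_combination ((X : PowerSeries k) ^ a * (X : PowerSeries k) ^ (a * p)) * e3C
      + ((X : PowerSeries k) ^ a * z1 ^ p) * e4C
      + ((X : PowerSeries k) ^ (a * p) * z1) * e4C
  -- order bounds for G
  have hXa : ((a : ℕ) : ℕ∞) ≤ ((X : PowerSeries k) ^ a).order :=
    le_of_eq (PowerSeries.order_X_pow a).symm
  have hXap : ((a * p : ℕ) : ℕ∞) ≤ ((X : PowerSeries k) ^ (a * p)).order :=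
    le_of_eq (PowerSeries.order_X_pow (a * p)).symm
  have hGbound : ∀ c n : ℕ, ((c : ℕ) : ℕ∞) ≤ w.order → n ≤ a + p * c → n ≤ a * p + c →
      n ≤ a' + p * a' → ((n : ℕ) : ℕ∞) ≤ G.order := by
    intro c n hc h1 h2' h3
    rw [hGid]
    exact ac_ord_add3 (ac_ord_weaken h1 (ac_ord_mul hXa (ac_ord_pow hc p)))
      (ac_ord_weaken h2' (ac_ord_mul hXap hc))
      (ac_ord_weaken h3 (ac_ord_C_mul e2 (ac_ord_mul hordz1 (ac_ord_pow hordz1 p))))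
  -- Step 1: the coefficient of w at a' vanishes
  have hwa' : coeff a' w = 0 := by
    by_contra hne
    have hz2c : coeff (a' + a) (z1 ^ 2) = 0 := by
      refine PowerSeries.coeff_of_lt_order _ (lt_of_lt_of_le ?_ (ac_ord_pow hordz1 2))
      exact_mod_cast (show a' + a < 2 * a' by omega)
    have hcF : coeff (a' + a) F = coeff a' w := by
      rw [hFid, map_add, coeff_X_pow_mul, coeff_C_mul, hz2c, mul_zero, add_zero]
    have hFle : F.order ≤ ((a' + a : ℕ) : ℕ∞) :=
      PowerSeries.order_le _ (by rw [hcF]; exact hne)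
    have h3a' : 3 * a' ≤ p * a' := Nat.mul_le_mul hp3 (le_refl a')
    have h3a : a * 3 ≤ a * p := Nat.mul_le_mul (le_refl a) hp3
    have hGge : ((a' + a + 1 : ℕ) : ℕ∞) ≤ G.order :=
      hGbound a' (a' + a + 1) hordw (by omega) (by omega) (by omega)
    have hcontra : ((a' + a + 1 : ℕ) : ℕ∞) ≤ ((a' + a : ℕ) : ℕ∞) :=
      le_trans hGge (le_trans hAB hFle)
    have : a' + a + 1 ≤ a' + a := by exact_mod_cast hcontra
    omega
  -- Step 2: both coefficients at a' are nonzero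
  have hwsum : coeff a' y + δ * coeff a' z = 0 := by rw [← hwa'c]; exact hwa'
  have hzne : coeff a' z ≠ 0 := by
    intro h0
    rcases ha' with hy0 | hz0
    · apply hy0
      rw [h0, mul_zero, add_zero] at hwsum
      exact hwsum
    · exact hz0 h0
  have hyne : coeff a' y ≠ 0 := by
    intro h0
    rw [h0, zero_add] at hwsum
    exact hzne ((mul_eq_zero.mp hwsum).resolve_left hδ0)
  -- Step 3: order of w is at least 2a' - a
  set N : ℕ := 2 * a' - a with hNdef
  have hNa : a + N = 2 * a' := by omega
  have hordwN : ((N : ℕ) : ℕ∞) ≤ w.order := by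
    by_contra hcon
    push_neg at hcon
    have hfin : w.order ≠ ⊤ := ne_top_of_lt hcon
    set m : ℕ := w.order.toNat with hmdef
    have hm : ((m : ℕ) : ℕ∞) = w.order := ENat.coe_toNat hfin
    have hmN : m < N := by
      have : ((m : ℕ) : ℕ∞) < ((N : ℕ) : ℕ∞) := by rw [hm]; exact hcon
      exact_mod_cast this
    have hmw : coeff m w ≠ 0 := by
      intro h0
      have hle : ((m + 1 : ℕ) : ℕ∞) ≤ w.order := by
        refine PowerSeries.nat_le_order _ _ ?_
        intro i hi
        rcases Nat.lt_succ_iff_lt_or_eq.mp hi with h | h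
        · exact PowerSeries.coeff_of_lt_order i (by rw [← hm]; exact_mod_cast h)
        · rw [h]; exact h0
      rw [← hm] at hle
      have : m + 1 ≤ m := by exact_mod_cast hle
      omega
    have hma : a' < m := by
      rcases lt_trichotomy m a' with h | h | h
      · exact absurd (hwlow m h) hmw
      · exact absurd (by rw [h]; exact hwa') hmw
      · exact h
    have hz2c : coeff (m + a) (z1 ^ 2) = 0 := by
      refine PowerSeries.coeff_of_lt_order _ (lt_of_lt_of_le ?_ (ac_ord_pow hordz1 2))
      exact_mod_cast (show m + a < 2 * a' by omega)
    have hcF : coeff (m + a) F = coeff m w := by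
      rw [hFid, map_add, coeff_X_pow_mul, coeff_C_mul, hz2c, mul_zero, add_zero]
    have hFle : F.order ≤ ((m + a : ℕ) : ℕ∞) :=
      PowerSeries.order_le _ (by rw [hcF]; exact hmw)
    have h3m : 3 * m ≤ p * m := Nat.mul_le_mul hp3 (le_refl m)
    have h3a : a * 3 ≤ a * p := Nat.mul_le_mul (le_refl a) hp3
    have h3a' : 3 * a' ≤ p * a' := Nat.mul_le_mul hp3 (le_refl a')
    have hGge : ((m + a + 1 : ℕ) : ℕ∞) ≤ G.order :=
      hGbound m (m + a + 1) (le_of_eq hm) (by omega) (by omega) (by omega)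
    have hcontra : ((m + a + 1 : ℕ) : ℕ∞) ≤ ((m + a : ℕ) : ℕ∞) :=
      le_trans hGge (le_trans hAB hFle)
    have : m + a + 1 ≤ m + a := by exact_mod_cast hcontra
    omega
  -- Step 4: conclude
  refine ⟨hyne, hzne, ?_⟩
  have hd : a + (a' - a) = a' := by omega
  have hd1 : 1 ≤ a' - a := by omega
  have f2 : (p - 1) * a + a = p * a := by
    have hps : (p - 1) + 1 = p := by omega
    calc (p - 1) * a + a = ((p - 1) + 1) * a := by ring
      _ = p * a := by rw [hps]
  have f7 : a' - a ≤ p * (a' - a) := Nat.le_mul_of_pos_left _ (by omega)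
  have f8 : p * a + p * (a' - a) = p * a' := by
    calc p * a + p * (a' - a) = p * (a + (a' - a)) := by ring
      _ = p * a' := by rw [hd]
  have f5 : p * N + p * a = 2 * (p * a') := by
    calc p * N + p * a = p * (N + a) := by ring
      _ = p * (2 * a') := by rw [show N + a = 2 * a' by omega]
      _ = 2 * (p * a') := by ring
  have f9 : a * p = p * a := by ring
  have t1 : (p - 1) * a + 2 * a' ≤ a + p * N := by
    have hgoal : (p - 1) * a + 2 * a' + (p * a + a) ≤ a + p * N + (p * a + a) := by
      linarith [f2, f5, f7, f8, hd]
    omega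
  have t2 : (p - 1) * a + 2 * a' ≤ a * p + N := by
    have hgoal : (p - 1) * a + 2 * a' + a ≤ a * p + N + a := by
      linarith [f2, f9, hNa, hd]
    omega
  have t3 : (p - 1) * a + 2 * a' ≤ a' + p * a' := by
    have hgoal : (p - 1) * a + 2 * a' + a ≤ a' + p * a' + a := by
      linarith [f2, f7, f8, hd]
    omega
  exact hGbound N ((p - 1) * a + 2 * a') hordwN t1 t2 t3
end
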